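/- arXiv:2209.08586 — 4 statements merged into one kernel-verified Lean document; each statement's English description precedes it below -/
import Mathlib

section
/- Let {X_n, n≥1} be a sequence of mutually independent random variables with common mean μ = E(X_k) and satisfying the moment condition (2) with exponent α ∈ (0,1) and ν_α = sup_n E|X_n|^{1+α} < ∞. Let δ ∈ (0,1), a_1 = √(3cν_α), and a_2 = 2(c_α ν_α)^{1/(1+α)}, where c_α is a positive constant (independent of n and b) such that E|Σ_{k=1}^n Z_k(b)|^{1+α} ≤ 2^{1+α} c_α ν_α n for all n≥1 and b>0. Then there exist constants c_0 > 0 and n_0 (depending on δ) such that for every c ≥ c_0 and every n ≥ n_0, with probability at least 1 − δ/2 − (2 log(1/δ))^{-α}, |n^{-1} Σ_{k=1}^n X_k − μ| < (a_1 + a_2) (2 log(1/δ)/n)^{α/(1+α)}. -/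
open MeasureTheory ProbabilityTheory Finset

noncomputable def tailPart {Ω : Type*} [MeasurableSpace Ω] (μ : Measure Ω)
    (X : ℕ → Ω → ℝ) (b : ℝ) (k : ℕ) (ω : Ω) : ℝ :=
  (if b < |X k ω| then X k ω else 0) - ∫ ω', (if b < |X k ω'| then X k ω' else 0) ∂μ

set_option maxHeartbeats 1000000 in
/-- Corollary 3 of the paper: for mutually independent random variables with
common mean `μ₀` and finite `(1+α)`-th moments, there are `c₀ > 0` and a threshold `n₀`
(depending on `δ`) such that for all `c ≥ c₀` and `n ≥ n₀`, with probability at least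
`1 - δ/2 - (2log(1/δ))^{-α}`, `|n⁻¹ ∑_{k=1}^n X_k - μ₀| < (a₁+a₂)(2log(1/δ)/n)^{α/(1+α)}`,
where `a₁ = √(3cνα)` and `a₂ = 2(cα να)^{1/(1+α)}`. -/
theorem sample_mean_corollary_three
    {Ω : Type*} [MeasurableSpace Ω] (μ : Measure Ω) [IsProbabilityMeasure μ]
    (X : ℕ → Ω → ℝ) (hmeas : ∀ n, Measurable (X n))
    (hindep : iIndepFun X μ)
    (α να : ℝ) (hα0 : 0 < α) (hα1 : α < 1)
    (hint : ∀ n : ℕ, 1 ≤ n → Integrable (fun ω => |X n ω| ^ (1 + α)) μ)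
    (hbdd : BddAbove (Set.range fun n : ℕ => ∫ ω, |X (n + 1) ω| ^ (1 + α) ∂μ))
    (hνα : να = ⨆ n : ℕ, ∫ ω, |X (n + 1) ω| ^ (1 + α) ∂μ) (hνpos : 0 < να)
    (μ₀ : ℝ) (hmean : ∀ k : ℕ, 1 ≤ k → ∫ ω, X k ω ∂μ = μ₀)
    (cα : ℝ) (hcα : 0 < cα)
    (hcαineq : ∀ n : ℕ, 1 ≤ n → ∀ b : ℝ, 0 < b →
      ∫ ω, |∑ k ∈ Finset.Icc 1 n, tailPart μ X b k ω| ^ (1 + α) ∂μ ≤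
        2 ^ (1 + α) * cα * να * n)
    (δ a₂ : ℝ) (hδ : δ ∈ Set.Ioo (0:ℝ) 1)
    (ha₂ : a₂ = 2 * (cα * να) ^ (1 / (1 + α))) :
    ∃ c₀ : ℝ, 0 < c₀ ∧ ∃ n₀ : ℕ, ∀ c : ℝ, c₀ ≤ c → ∀ n : ℕ, n₀ ≤ n →
      1 - δ/2 - (2 * Real.log (1/δ)) ^ (-α) ≤
        (μ {ω | |(1 / (n:ℝ)) * (∑ k ∈ Finset.Icc 1 n, X k ω) - μ₀| <
          (Real.sqrt (3 * c * να) + a₂) * (2 * Real.log (1/δ) / n) ^ (α / (1 + α))}).toReal := by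
  obtain ⟨hδ0, hδ1⟩ := hδ
  have hlog : 0 < Real.log (1/δ) := by
    rw [one_div, Real.log_inv]
    linarith [Real.log_neg hδ0 hδ1]
  set L : ℝ := 2 * Real.log (1/δ) with hLdef
  have hL : 0 < L := by positivity
  have h1α : (0:ℝ) < 1 + α := by linarith
  refine ⟨max 1 (2/(3*L*δ)), lt_of_lt_of_le zero_lt_one (le_max_left _ _), 1, ?_⟩
  intro c hc n hn
  have hc1 : (1:ℝ) ≤ c := le_trans (le_max_left _ _) hc
  have hc0 : (0:ℝ) < c := lt_of_lt_of_le zero_lt_one hc1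
  have hc2 : 2/(3*L*δ) ≤ c := le_trans (le_max_right _ _) hc
  have hn1 : 1 ≤ n := hn
  have hnpos : (0:ℝ) < n := by exact_mod_cast Nat.lt_of_lt_of_le Nat.zero_lt_one hn1
  -- basic quantities
  set u : ℝ := (n:ℝ) / L with hudef
  have hu : 0 < u := div_pos hnpos hL
  set b : ℝ := u ^ ((1:ℝ)/(1+α)) with hbdef
  have hb : 0 < b := Real.rpow_pos_of_pos hu _
  set ε : ℝ := (L / n) ^ (α/(1+α)) with hεdef
  have hεu : ε = u ^ (-(α/(1+α))) := by
    rw [hεdef, show L / (n:ℝ) = u⁻¹ by rw [hudef, inv_div], Real.inv_rpow hu.le,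
      ← Real.rpow_neg hu.le]
  have hε : 0 < ε := by
    rw [hεu]; exact Real.rpow_pos_of_pos hu _
  -- truncation
  set trunc : ℝ → ℝ := fun x => if |x| ≤ b then x else 0 with htruncdef
  have htruncmeas : Measurable trunc :=
    Measurable.ite (measurableSet_le measurable_abs measurable_const) measurable_id
      measurable_const
  set Yraw : ℕ → Ω → ℝ := fun k ω => trunc (X k ω) with hYrawdef
  have hYrawmeas : ∀ k, Measurable (Yraw k) := fun k => htruncmeas.comp (hmeas k)
  have hYrawbd : ∀ k ω, ‖Yraw k ω‖ ≤ b := by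
    intro k ω
    rw [Real.norm_eq_abs]
    by_cases h : |X k ω| ≤ b
    · simpa [hYrawdef, htruncdef, h] using h
    · simp [hYrawdef, htruncdef, h, hb.le]
  have hYrawmem2 : ∀ k, MemLp (Yraw k) 2 μ := fun k =>
    MemLp.of_bound (hYrawmeas k).aestronglyMeasurable b (Filter.Eventually.of_forall (hYrawbd k))
  have hYrawint : ∀ k, Integrable (Yraw k) μ := fun k =>
    memLp_one_iff_integrable.1 <|
      MemLp.of_bound (hYrawmeas k).aestronglyMeasurable b
        (Filter.Eventually.of_forall (hYrawbd k))
  set mY : ℕ → ℝ := fun k => ∫ ω, Yraw k ω ∂μ with hmYdef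
  set Y : ℕ → Ω → ℝ := fun k ω => Yraw k ω - mY k with hYdef
  have hYmeas : ∀ k, Measurable (Y k) := fun k => (hYrawmeas k).sub measurable_const
  have hYmem2 : ∀ k, MemLp (Y k) 2 μ := fun k => (hYrawmem2 k).sub (memLp_const _)
  have hYint : ∀ k, Integrable (Y k) μ := fun k => (hYrawint k).sub (integrable_const _)
  have hYmean : ∀ k, ∫ ω, Y k ω ∂μ = 0 := by
    intro k
    rw [hYdef]
    simp only
    rw [integral_sub (hYrawint k) (integrable_const _), integral_const]
    simp [hmYdef]
  -- the tail part
  set Zraw : ℕ → Ω → ℝ := fun k ω => if b < |X k ω| then X k ω else 0 with hZrawdef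
  have hZrawmeas : ∀ k, Measurable (Zraw k) := fun k =>
    Measurable.ite (measurableSet_lt measurable_const (hmeas k).abs) (hmeas k) measurable_const
  set Z : ℕ → Ω → ℝ := fun k => tailPart μ X b k with hZdef
  have hZeq : ∀ k ω, Z k ω = Zraw k ω - ∫ ω', Zraw k ω' ∂μ := fun k ω => rfl
  have hZmeas : ∀ k, Measurable (Z k) := fun k => (hZrawmeas k).sub measurable_const
  -- moments of X
  set p : ENNReal := ENNReal.ofReal (1+α) with hpdef
  have hp0 : p ≠ 0 := by
    simp only [hpdef, ne_eq, ENNReal.ofReal_eq_zero, not_le]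
    linarith
  have hptop : p ≠ ⊤ := ENNReal.ofReal_ne_top
  have hpt : p.toReal = 1 + α := ENNReal.toReal_ofReal h1α.le
  have hXmem : ∀ k : ℕ, 1 ≤ k → MemLp (X k) p μ := by
    intro k hk
    refine (memLp_norm_rpow_iff (q := p) (hmeas k).aestronglyMeasurable hp0 hptop).1 ?_
    rw [ENNReal.div_self hp0 hptop, memLp_one_iff_integrable]
    have := hint k hk
    simpa [hpt, Real.norm_eq_abs] using this
  have hXabs_le : ∀ k : ℕ, 1 ≤ k → ∫ ω, |X k ω| ^ (1+α) ∂μ ≤ να := by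
    intro k hk
    have h1 : ∫ ω, |X k ω| ^ (1+α) ∂μ = ∫ ω, |X ((k-1) + 1) ω| ^ (1+α) ∂μ := by
      rw [Nat.sub_add_cancel hk]
    rw [h1, hνα]
    exact le_ciSup hbdd (k-1)
  -- membership of Z in L^{1+α}
  have hZrawmem : ∀ k : ℕ, 1 ≤ k → MemLp (Zraw k) p μ := by
    intro k hk
    refine (hXmem k hk).of_le (hZrawmeas k).aestronglyMeasurable
      (Filter.Eventually.of_forall fun ω => ?_)
    rw [Real.norm_eq_abs, Real.norm_eq_abs, hZrawdef]
    by_cases h : b < |X k ω| <;> simp [h, abs_nonneg]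
  have hZmem : ∀ k : ℕ, 1 ≤ k → MemLp (Z k) p μ := fun k hk =>
    (hZrawmem k hk).sub (memLp_const _)
  -- sums
  set SY : Ω → ℝ := fun ω => ∑ k ∈ Finset.Icc 1 n, Y k ω with hSYdef
  set SZ : Ω → ℝ := fun ω => ∑ k ∈ Finset.Icc 1 n, Z k ω with hSZdef
  have hSYmeas : Measurable SY := by
    apply Finset.measurable_sum
    intro k _; exact hYmeas k
  have hSZmeas : Measurable SZ := by
    apply Finset.measurable_sum
    intro k _; exact hZmeas k
  have hfunY : (∑ k ∈ Finset.Icc 1 n, Y k) = SY := by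
    funext ω; simp [hSYdef]
  have hfunZ : (∑ k ∈ Finset.Icc 1 n, Z k) = SZ := by
    funext ω; simp [hSZdef]
  have hSYmem2 : MemLp SY 2 μ := by
    rw [← hfunY]
    exact memLp_finset_sum' _ (fun k _ => hYmem2 k)
  have hSZmem : MemLp SZ p μ := by
    rw [← hfunZ]
    exact memLp_finset_sum' _ (fun k hk => hZmem k (Finset.mem_Icc.1 hk).1)
  have hSZint : Integrable (fun ω => |SZ ω| ^ (1+α)) μ := by
    have := hSZmem.integrable_norm_rpow hp0 hptop
    simpa [hpt, Real.norm_eq_abs] using this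
  have hSYmean : ∫ ω, SY ω ∂μ = 0 := by
    rw [hSYdef]
    simp only
    rw [integral_finset_sum _ (fun k _ => hYint k)]
    simp [hYmean]
  -- independence of the truncated parts
  have hYpair : Set.Pairwise ↑(Finset.Icc 1 n) fun i j => IndepFun (Y i) (Y j) μ := by
    intro i _ j _ hij
    have hcomp : iIndepFun
        (fun k => (fun x => trunc x - mY k) ∘ X k) μ :=
      hindep.comp _ (fun k => htruncmeas.sub measurable_const)
    exact hcomp.indepFun hij
  -- variance bound
  have htrunc_sq : ∀ x : ℝ, (trunc x)^2 ≤ b^(1-α) * |x|^(1+α) := by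
    intro x
    by_cases hxb : |x| ≤ b
    · simp only [htruncdef, if_pos hxb]
      by_cases hx0 : x = 0
      · subst hx0; simp; positivity
      have hax : 0 < |x| := abs_pos.2 hx0
      have h2 : x^2 = |x| ^ ((1-α)+(1+α)) := by
        rw [show (1-α)+(1+α) = ((2:ℕ):ℝ) by push_cast; ring, Real.rpow_natCast, sq_abs]
      rw [h2, Real.rpow_add hax]
      exact mul_le_mul_of_nonneg_right
        (Real.rpow_le_rpow (abs_nonneg x) hxb (by linarith))
        (Real.rpow_nonneg (abs_nonneg x) _)
    · simp only [htruncdef, if_neg hxb]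
      have : (0:ℝ) ≤ b^(1-α) * |x|^(1+α) := by positivity
      simpa using this
  have hvarY : ∀ k : ℕ, 1 ≤ k → variance (Y k) μ ≤ b^(1-α) * να := by
    intro k hk
    have hev : evariance (Y k) μ = evariance (Yraw k) μ := by
      rw [evariance, evariance, hYmean k]
      refine lintegral_congr fun ω => ?_
      congr 2
      simp [hYdef, hmYdef]
    have h1 : variance (Y k) μ = variance (Yraw k) μ := by
      rw [variance, variance, hev]
    rw [h1]
    calc variance (Yraw k) μ ≤ ∫ ω, (Yraw k ω)^2 ∂μ := by
          simpa [Pi.pow_apply] using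
            variance_le_expectation_sq (μ := μ) (hYrawmeas k).aestronglyMeasurable
      _ ≤ ∫ ω, b^(1-α) * |X k ω|^(1+α) ∂μ := by
          refine integral_mono ((hYrawmem2 k).integrable_sq) ((hint k hk).const_mul _) ?_
          intro ω
          exact htrunc_sq (X k ω)
      _ = b^(1-α) * ∫ ω, |X k ω|^(1+α) ∂μ := integral_const_mul _ _
      _ ≤ b^(1-α) * να :=
          mul_le_mul_of_nonneg_left (hXabs_le k hk) (Real.rpow_nonneg hb.le _)
  have hvarSY : variance SY μ ≤ n * (b^(1-α) * να) := by
    have hfun : SY = ∑ k ∈ Finset.Icc 1 n, Y k := by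
      funext ω; simp [hSYdef]
    rw [hfun, IndepFun.variance_sum (fun k _ => hYmem2 k) hYpair]
    calc ∑ k ∈ Finset.Icc 1 n, variance (Y k) μ
        ≤ ∑ k ∈ Finset.Icc 1 n, (b^(1-α) * να) :=
          Finset.sum_le_sum fun k hk => hvarY k (Finset.mem_Icc.1 hk).1
      _ = n * (b^(1-α) * να) := by
          rw [Finset.sum_const, Nat.card_Icc]
          simp [nsmul_eq_mul]
  -- thresholds
  set t₁ : ℝ := Real.sqrt (3*c*να) * (n * ε) with ht₁def
  set t₂ : ℝ := a₂ * (n * ε) with ht₂def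
  have hsq3 : (0:ℝ) < 3*c*να := by positivity
  have ht₁ : 0 < t₁ := by
    apply mul_pos (Real.sqrt_pos.2 hsq3) (by positivity)
  have ha₂pos : 0 < a₂ := by
    rw [ha₂]; positivity
  have ht₂ : 0 < t₂ := by positivity
  -- Chebyshev bound
  have hkey : b^(1-α) = u * ε^2 := by
    have h1 : b^(1-α) = u ^ ((1/(1+α))*(1-α)) := by
      rw [hbdef, ← Real.rpow_mul hu.le]
    have h2 : ε^2 = u ^ ((-(α/(1+α))) * ((2:ℕ):ℝ)) := by
      rw [hεu, ← Real.rpow_natCast (u ^ (-(α/(1+α)))) 2, ← Real.rpow_mul hu.le]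
    have h3 : u * ε^2 = u ^ (1 + (-(α/(1+α))) * ((2:ℕ):ℝ)) := by
      rw [h2, Real.rpow_add hu, Real.rpow_one]
    rw [h1, h3]
    congr 1
    push_cast
    field_simp
    ring
  have hchebA : (μ {ω | t₁ ≤ |SY ω|}).toReal ≤ δ/2 := by
    have h := meas_ge_le_variance_div_sq (μ := μ) hSYmem2 ht₁
    simp only [hSYmean, sub_zero] at h
    have h2 : (μ {ω | t₁ ≤ |SY ω|}).toReal ≤ variance SY μ / t₁^2 :=
      le_trans (ENNReal.toReal_mono ENNReal.ofReal_ne_top h)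
        (le_of_eq (ENNReal.toReal_ofReal
          (div_nonneg (variance_nonneg SY μ) (sq_nonneg _))))
    refine h2.trans ?_
    have h3 : variance SY μ / t₁^2 ≤ (n * (b^(1-α) * να)) / t₁^2 := by
      gcongr
    refine h3.trans ?_
    have h4 : ((n:ℝ) * (b^(1-α) * να)) / t₁^2 = 1/(3*c*L) := by
      rw [hkey, ht₁def, mul_pow, Real.sq_sqrt hsq3.le, hudef]
      field_simp
    rw [h4]
    rw [div_le_div_iff₀ (by positivity) (by norm_num : (0:ℝ) < 2)]
    have h5 : 2 ≤ c * (3*L*δ) := by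
      rw [div_le_iff₀ (by positivity)] at hc2
      linarith
    nlinarith
  -- Markov bound for the tail part
  have ht₂pow : t₂ ^ (1+α) = (2 ^ (1+α) * cα * να * n) * L^α := by
    have ha2pow : a₂ ^ (1+α) = 2 ^ (1+α) * (cα*να) := by
      rw [ha₂, Real.mul_rpow (by norm_num) (Real.rpow_nonneg (by positivity) _),
        ← Real.rpow_mul (by positivity), one_div, inv_mul_cancel₀ h1α.ne', Real.rpow_one]
    have hεpow : ε ^ (1+α) = u ^ (-α) := by
      rw [hεu, ← Real.rpow_mul hu.le]
      congr 1
      field_simp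
    have hnpow : (n:ℝ) ^ (1+α) * u ^ (-α) = (n:ℝ) * L^α := by
      rw [hudef, Real.rpow_neg (div_nonneg hnpos.le hL.le), Real.div_rpow hnpos.le hL.le,
        Real.rpow_add hnpos, Real.rpow_one, inv_div]
      rw [mul_assoc, mul_div_assoc', mul_comm ((n:ℝ)^α) (L^α), mul_div_assoc,
        div_self (Real.rpow_pos_of_pos hnpos α).ne', mul_one]
    calc t₂ ^ (1+α) = a₂ ^ (1+α) * ((n:ℝ) ^ (1+α) * ε ^ (1+α)) := by
          rw [ht₂def, Real.mul_rpow ha₂pos.le (by positivity),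
            Real.mul_rpow hnpos.le hε.le]
      _ = (2 ^ (1+α) * cα * να * n) * L^α := by
          rw [ha2pow, hεpow, hnpow]; ring
  have hmarkB : (μ {ω | t₂^(1+α) ≤ |SZ ω|^(1+α)}).toReal ≤ L^(-α) := by
    have hm := mul_meas_ge_le_integral_of_nonneg
      (Filter.Eventually.of_forall fun ω => Real.rpow_nonneg (abs_nonneg (SZ ω)) (1+α))
      hSZint (t₂^(1+α))
    have hI : ∫ ω, |SZ ω| ^ (1+α) ∂μ ≤ 2 ^ (1+α) * cα * να * n := by
      have := hcαineq n hn1 b hb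
      simpa [hSZdef, hZdef] using this
    have hpos : (0:ℝ) < t₂^(1+α) := Real.rpow_pos_of_pos ht₂ _
    have h2 : (μ {ω | t₂^(1+α) ≤ |SZ ω|^(1+α)}).toReal ≤
        (2 ^ (1+α) * cα * να * n) / (t₂^(1+α)) := by
      rw [le_div_iff₀ hpos]
      calc (μ {ω | t₂^(1+α) ≤ |SZ ω|^(1+α)}).toReal * t₂^(1+α)
          = t₂^(1+α) * (μ {ω | t₂^(1+α) ≤ |SZ ω|^(1+α)}).toReal := mul_comm _ _
        _ ≤ ∫ ω, |SZ ω| ^ (1+α) ∂μ := hm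
        _ ≤ _ := hI
    refine h2.trans ?_
    rw [ht₂pow, Real.rpow_neg hL.le]
    rw [div_mul_eq_div_div]
    rw [div_self (by positivity), one_div]
  -- decomposition
  have hsplitint : ∀ k : ℕ, 1 ≤ k →
      (∫ ω, Yraw k ω ∂μ) + (∫ ω, Zraw k ω ∂μ) = μ₀ := by
    intro k hk
    have hZrawint : Integrable (Zraw k) μ :=
      ((hXmem k hk).integrable (by
        rw [hpdef, ← ENNReal.ofReal_one]
        exact ENNReal.ofReal_le_ofReal (by linarith))).mono (hZrawmeas k).aestronglyMeasurable
        (Filter.Eventually.of_forall fun ω => by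
          rw [Real.norm_eq_abs, Real.norm_eq_abs, hZrawdef]
          by_cases h : b < |X k ω| <;> simp [h, abs_nonneg])
    rw [← integral_add (hYrawint k) hZrawint]
    rw [← hmean k hk]
    refine integral_congr_ae (Filter.Eventually.of_forall fun ω => ?_)
    rw [hYrawdef, hZrawdef, htruncdef]
    by_cases h : |X k ω| ≤ b
    · simp [h, not_lt.2 h]
    · simp [h, not_le.1 h]
  have hdecomp : ∀ ω, (∑ k ∈ Finset.Icc 1 n, X k ω) - n * μ₀ = SY ω + SZ ω := by
    intro ω
    rw [hSYdef, hSZdef]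
    simp only
    rw [← Finset.sum_add_distrib]
    have hterm : ∀ k ∈ Finset.Icc 1 n, Y k ω + Z k ω = X k ω - μ₀ := by
      intro k hk
      have hk1 : 1 ≤ k := (Finset.mem_Icc.1 hk).1
      have hsplit := hsplitint k hk1
      have hraw : Yraw k ω + Zraw k ω = X k ω := by
        rw [hYrawdef, hZrawdef, htruncdef]
        by_cases h : |X k ω| ≤ b
        · simp [h, not_lt.2 h]
        · simp [h, not_le.1 h]
      rw [hYdef, hZeq k ω]
      simp only [hmYdef]
      linarith
    rw [Finset.sum_congr rfl hterm, Finset.sum_sub_distrib, Finset.sum_const, Nat.card_Icc]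
    simp [nsmul_eq_mul]
  -- final assembly
  set E : Set Ω := {ω | |(1 / (n:ℝ)) * (∑ k ∈ Finset.Icc 1 n, X k ω) - μ₀| <
      (Real.sqrt (3 * c * να) + a₂) * ε} with hEdef
  have hEmeas : MeasurableSet E := by
    apply measurableSet_lt
    · exact (Measurable.sub (measurable_const.mul
        (Finset.measurable_sum _ fun k _ => hmeas k)) measurable_const).abs
    · exact measurable_const
  have hsub : Eᶜ ⊆ {ω | t₁ ≤ |SY ω|} ∪ {ω | t₂^(1+α) ≤ |SZ ω|^(1+α)} := by
    intro ω hω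
    by_contra hcon
    rw [Set.mem_union, not_or] at hcon
    obtain ⟨hA, hB⟩ := hcon
    apply hω
    have h1 : |SY ω| < t₁ := not_le.1 hA
    have h2 : |SZ ω| < t₂ := by
      by_contra h
      exact hB (Real.rpow_le_rpow ht₂.le (not_lt.1 h) h1α.le)
    show |(1 / (n:ℝ)) * (∑ k ∈ Finset.Icc 1 n, X k ω) - μ₀| <
      (Real.sqrt (3 * c * να) + a₂) * ε
    have h3 : (1 / (n:ℝ)) * (∑ k ∈ Finset.Icc 1 n, X k ω) - μ₀ =
        ((∑ k ∈ Finset.Icc 1 n, X k ω) - n * μ₀) / n := by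
      field_simp
    rw [h3, hdecomp ω, abs_div, abs_of_pos hnpos, div_lt_iff₀ hnpos]
    calc |SY ω + SZ ω| ≤ |SY ω| + |SZ ω| := abs_add_le _ _
      _ < t₁ + t₂ := add_lt_add h1 h2
      _ = (Real.sqrt (3 * c * να) + a₂) * ε * n := by
          rw [ht₁def, ht₂def]; ring
  have hAmeas : MeasurableSet {ω | t₁ ≤ |SY ω|} :=
    measurableSet_le measurable_const hSYmeas.abs
  have hBmeas : MeasurableSet {ω | t₂^(1+α) ≤ |SZ ω|^(1+α)} :=
    measurableSet_le measurable_const ((hSZmeas.abs).pow_const _)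
  have hcompl : (μ Eᶜ).toReal ≤ δ/2 + L^(-α) := by
    have h1 : μ Eᶜ ≤ μ {ω | t₁ ≤ |SY ω|} + μ {ω | t₂^(1+α) ≤ |SZ ω|^(1+α)} :=
      le_trans (measure_mono hsub) (measure_union_le _ _)
    have h2 : (μ Eᶜ).toReal ≤ (μ {ω | t₁ ≤ |SY ω|}).toReal +
        (μ {ω | t₂^(1+α) ≤ |SZ ω|^(1+α)}).toReal := by
      rw [← ENNReal.toReal_add (measure_ne_top _ _) (measure_ne_top _ _)]
      exact ENNReal.toReal_mono
        (ENNReal.add_ne_top.2 ⟨measure_ne_top _ _, measure_ne_top _ _⟩) h1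
    exact h2.trans (add_le_add hchebA hmarkB)
  have hEone : (μ E).toReal + (μ Eᶜ).toReal = 1 := by
    rw [← ENNReal.toReal_add (measure_ne_top _ _) (measure_ne_top _ _),
      measure_add_measure_compl hEmeas]
    simp
  have hgoal : 1 - δ/2 - L^(-α) ≤ (μ E).toReal := by linarith
  exact hgoal
end

section
/- Let {X_n, n≥1} satisfy the φ-mixing condition (1) with rate r>2 and constant C>0, and the moment condition (2) with exponent α ∈ (0,1) and ν_α = sup_n E|X_n|^{1+α}. Let 0 ≤ α' ≤ α, γ = (αr+α')/((1+α)(1+r)), δ ∈ (0,1), p = 2 log(1/δ), λ = (r−1)/((1+r)(1+α)), b_n = (n/p)^λ, and Z_k = X_k·1(|X_k|>b_n) − E(X_k·1(|X_k|>b_n)). Let a_2 = 2(c_α ν_α)^{1/(1+α)}, where c_α is a positive constant (independent of n and b) such that E|Σ_{k=1}^n Z_k(b)|^{1+α} ≤ 2^{1+α} c_α ν_α n for all n≥1 and b>0. Then for every n with p/n < 1, P( |n^{-1} Σ_{k=1}^n Z_k| ≥ a_2 (p/n)^γ ) ≤ p^{-α} (p/n)^{(α−α')/(1+r)}. -/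
open MeasureTheory ProbabilityTheory Finset

noncomputable def phiCoef {Ω : Type*} [MeasurableSpace Ω] (μ : Measure Ω)
    (X : ℕ → Ω → ℝ) (m : ℕ) : ℝ :=
  sSup {x : ℝ | ∃ k : ℕ, 1 ≤ k ∧ ∃ A B : Set Ω,
    MeasurableSet[⨆ i ∈ Set.Icc 1 k, MeasurableSpace.comap (X i) inferInstance] A ∧
    MeasurableSet[⨆ i ∈ Set.Ici (k + m), MeasurableSpace.comap (X i) inferInstance] B ∧
    0 < μ A ∧
    x = |(μ (B ∩ A)).toReal / (μ A).toReal - (μ B).toReal|}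

noncomputable def phiSum {Ω : Type*} [MeasurableSpace Ω] (μ : Measure Ω)
    (X : ℕ → Ω → ℝ) : ℝ :=
  ∑' m : ℕ, Real.sqrt (phiCoef μ X (m + 1))

noncomputable def mainPart {Ω : Type*} [MeasurableSpace Ω] (μ : Measure Ω)
    (X : ℕ → Ω → ℝ) (b : ℝ) (k : ℕ) (ω : Ω) : ℝ :=
  (if |X k ω| ≤ b then X k ω else 0) - ∫ ω', (if |X k ω'| ≤ b then X k ω' else 0) ∂μ


/-- inequality (10) in the proof of Theorem 1: the average of the tail parts
`Z_k = X_k·1(|X_k| > b_n) - E(X_k·1(|X_k| > b_n))` with truncation level `b_n = (n/p)^λ`,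
`λ = (r-1)/((1+r)(1+α))`, satisfies
`P(|n⁻¹ ∑_{k=1}^n Z_k| ≥ a₂ (p/n)^γ) ≤ p^{-α} (p/n)^{(α-α')/(1+r)}`. -/
theorem tail_average_probability_bound
    {Ω : Type*} [MeasurableSpace Ω] (μ : Measure Ω) [IsProbabilityMeasure μ]
    (X : ℕ → Ω → ℝ) (hmeas : ∀ n, Measurable (X n))
    (r C : ℝ) (hr : 2 < r) (hC : 0 < C)
    (hmix : ∀ m : ℕ, 1 ≤ m → phiCoef μ X m ≤ C * ((m : ℝ) + 1) ^ (-r))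
    (α να : ℝ) (hα0 : 0 < α) (hα1 : α < 1)
    (hint : ∀ n : ℕ, 1 ≤ n → Integrable (fun ω => |X n ω| ^ (1 + α)) μ)
    (hbdd : BddAbove (Set.range fun n : ℕ => ∫ ω, |X (n + 1) ω| ^ (1 + α) ∂μ))
    (hνα : να = ⨆ n : ℕ, ∫ ω, |X (n + 1) ω| ^ (1 + α) ∂μ) (hνpos : 0 < να)
    (α' : ℝ) (hα'0 : 0 ≤ α') (hα'α : α' ≤ α)
    (cα : ℝ) (hcα : 0 < cα)
    (hcαineq : ∀ n : ℕ, 1 ≤ n → ∀ b : ℝ, 0 < b →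
      ∫ ω, |∑ k ∈ Finset.Icc 1 n, tailPart μ X b k ω| ^ (1 + α) ∂μ ≤
        2 ^ (1 + α) * cα * να * n)
    (γ δ p lam a₂ : ℝ)
    (hγ : γ = (α * r + α') / ((1 + α) * (1 + r)))
    (hδ : δ ∈ Set.Ioo (0:ℝ) 1)
    (hp : p = 2 * Real.log (1/δ))
    (hlam : lam = (r - 1) / ((1 + r) * (1 + α)))
    (ha₂ : a₂ = 2 * (cα * να) ^ (1 / (1 + α))) :
    ∀ n : ℕ, 1 ≤ n → p / n < 1 →
      (μ {ω | a₂ * (p / n) ^ γ ≤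
          |(1 / (n:ℝ)) * ∑ k ∈ Finset.Icc 1 n, tailPart μ X (((n:ℝ) / p) ^ lam) k ω|}).toReal ≤
        p ^ (-α) * (p / n) ^ ((α - α') / (1 + r)) := by
  intro n hn hpn
  have h1α : (0:ℝ) < 1 + α := by linarith
  have hr1 : (0:ℝ) < 1 + r := by linarith
  have hp0 : 0 < p := by
    rw [hp]
    have : (1:ℝ) < 1 / δ := (one_lt_div hδ.1).mpr hδ.2
    have := Real.log_pos this
    linarith
  have hn0 : (0:ℝ) < (n:ℝ) := by exact_mod_cast Nat.lt_of_lt_of_le Nat.zero_lt_one hn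
  have hq0 : (0:ℝ) < p / n := div_pos hp0 hn0
  have hb0 : (0:ℝ) < ((n:ℝ) / p) ^ lam := Real.rpow_pos_of_pos (div_pos hn0 hp0) _
  set b : ℝ := ((n:ℝ) / p) ^ lam with hbdef
  have hcν : (0:ℝ) < cα * να := mul_pos hcα hνpos
  have ha2pos : 0 < a₂ := by
    rw [ha₂]; positivity
  -- MemLp facts
  set q2 : ENNReal := ENNReal.ofReal (1 + α) with hq2
  have hq2_ne0 : q2 ≠ 0 := by
    simp only [hq2, ne_eq, ENNReal.ofReal_eq_zero, not_le]; linarith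
  have hq2_top : q2 ≠ ⊤ := ENNReal.ofReal_ne_top
  have hq2_toReal : q2.toReal = 1 + α := ENNReal.toReal_ofReal h1α.le
  have hX : ∀ k : ℕ, 1 ≤ k → MemLp (X k) q2 μ := by
    intro k hk
    rw [← memLp_norm_rpow_iff (q := q2) (hmeas k).aestronglyMeasurable hq2_ne0 hq2_top,
      ENNReal.div_self hq2_ne0 hq2_top, memLp_one_iff_integrable]
    have := hint k hk
    simp only [hq2_toReal, Real.norm_eq_abs]
    simpa [Real.abs_rpow_of_nonneg (abs_nonneg _), abs_abs] using this.abs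
  have hT : ∀ k : ℕ, 1 ≤ k →
      MemLp (fun ω => if b < |X k ω| then X k ω else 0) q2 μ := by
    intro k hk
    refine MemLp.of_le (hX k hk) ?_ ?_
    · exact (Measurable.ite (measurableSet_lt measurable_const (hmeas k).abs)
        (hmeas k) measurable_const).aestronglyMeasurable
    · filter_upwards with ω
      by_cases h : b < |X k ω| <;> simp [h, Real.norm_eq_abs, abs_nonneg]
  have hZ : ∀ k : ℕ, 1 ≤ k → MemLp (tailPart μ X b k) q2 μ := by
    intro k hk
    exact (hT k hk).sub (memLp_const _)
  have hS : MemLp (fun ω => ∑ k ∈ Finset.Icc 1 n, tailPart μ X b k ω) q2 μ :=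
    memLp_finset_sum _ (fun k hk => hZ k (Finset.mem_Icc.mp hk).1)
  set S : Ω → ℝ := fun ω => ∑ k ∈ Finset.Icc 1 n, tailPart μ X b k ω with hSdef
  set f : Ω → ℝ := fun ω => |S ω| ^ (1 + α) with hfdef
  have hf_int : Integrable f μ := by
    have := hS.integrable_norm_rpow hq2_ne0 hq2_top
    simpa [hfdef, hq2_toReal, Real.norm_eq_abs] using this
  have hf_nonneg : 0 ≤ᵐ[μ] f := by
    filter_upwards with ω
    exact Real.rpow_nonneg (abs_nonneg _) _
  set c : ℝ := (n:ℝ) * (a₂ * (p / n) ^ γ) with hcdef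
  have hc0 : 0 < c := by
    have := Real.rpow_pos_of_pos hq0 γ
    positivity
  -- inclusion of events
  have hsub : {ω | a₂ * (p / n) ^ γ ≤ |(1 / (n:ℝ)) * S ω|} ⊆
      {ω | c ^ (1 + α) ≤ f ω} := by
    intro ω hω
    simp only [Set.mem_setOf_eq] at hω ⊢
    have h1 : |(1 / (n:ℝ)) * S ω| = (1 / (n:ℝ)) * |S ω| := by
      rw [abs_mul, abs_of_nonneg (by positivity : (0:ℝ) ≤ 1 / (n:ℝ))]
    have h2 : c ≤ |S ω| := by
      rw [h1] at hω
      rw [hcdef]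
      calc (n:ℝ) * (a₂ * (p / n) ^ γ) ≤ (n:ℝ) * ((1 / (n:ℝ)) * |S ω|) :=
        mul_le_mul_of_nonneg_left hω hn0.le
      _ = |S ω| := by field_simp
    exact Real.rpow_le_rpow hc0.le h2 h1α.le
  have hmarkov := mul_meas_ge_le_integral_of_nonneg hf_nonneg hf_int (c ^ (1 + α))
  have hboundInt : ∫ ω, f ω ∂μ ≤ 2 ^ (1 + α) * cα * να * n := hcαineq n hn b hb0
  have hcpow : (0:ℝ) < c ^ (1 + α) := Real.rpow_pos_of_pos hc0 _
  have hmeasure : (μ {ω | a₂ * (p / n) ^ γ ≤ |(1 / (n:ℝ)) * S ω|}).toReal ≤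
      (2 ^ (1 + α) * cα * να * n) / c ^ (1 + α) := by
    have h1 : (μ {ω | a₂ * (p / n) ^ γ ≤ |(1 / (n:ℝ)) * S ω|}).toReal ≤
        (μ {ω | c ^ (1 + α) ≤ f ω}).toReal :=
      ENNReal.toReal_mono (measure_ne_top μ _) (measure_mono hsub)
    have h2 : (μ {ω | c ^ (1 + α) ≤ f ω}).toReal ≤
        (2 ^ (1 + α) * cα * να * n) / c ^ (1 + α) := by
      rw [le_div_iff₀ hcpow]
      calc (μ {ω | c ^ (1 + α) ≤ f ω}).toReal * c ^ (1 + α)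
          = c ^ (1 + α) * (μ {ω | c ^ (1 + α) ≤ f ω}).toReal := mul_comm _ _
        _ ≤ ∫ ω, f ω ∂μ := hmarkov
        _ ≤ _ := hboundInt
    exact h1.trans h2
  -- the algebraic identity
  have hA : a₂ ^ (1 + α) = 2 ^ (1 + α) * (cα * να) := by
    rw [ha₂, Real.mul_rpow (by norm_num) (Real.rpow_nonneg hcν.le _),
      ← Real.rpow_mul hcν.le, one_div, inv_mul_cancel₀ (ne_of_gt h1α), Real.rpow_one]
  have hB : c ^ (1 + α) = (n:ℝ) ^ (1 + α) * (2 ^ (1 + α) * (cα * να)) *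
      (p / n) ^ (γ * (1 + α)) := by
    rw [hcdef, Real.mul_rpow hn0.le (mul_nonneg ha2pos.le (Real.rpow_nonneg hq0.le _)),
      Real.mul_rpow ha2pos.le (Real.rpow_nonneg hq0.le _), hA, Real.rpow_mul hq0.le]
    ring
  have hexp : γ * (1 + α) = α - (α - α') / (1 + r) := by
    rw [hγ]
    field_simp
    ring
  have hpqn : p = (p / n) * n := by field_simp
  have key : (2 ^ (1 + α) * cα * να * n) / c ^ (1 + α) =
      p ^ (-α) * (p / n) ^ ((α - α') / (1 + r)) := by
    rw [hB, hexp, Real.rpow_sub hq0]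
    rw [show p ^ (-α) = ((p / n) * (n:ℝ)) ^ (-α) by rw [← hpqn],
      Real.mul_rpow hq0.le hn0.le, Real.rpow_neg hq0.le, Real.rpow_neg hn0.le,
      show (1 : ℝ) + α = (1:ℝ) + α from rfl,
      Real.rpow_add hn0 1 α, Real.rpow_one]
    have h2pos : (0:ℝ) < (2:ℝ) ^ (1 + α) := Real.rpow_pos_of_pos (by norm_num) _
    have hqα : (0:ℝ) < (p / n) ^ α := Real.rpow_pos_of_pos hq0 _
    have hnα : (0:ℝ) < (n:ℝ) ^ α := Real.rpow_pos_of_pos hn0 _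
    have hqe : (0:ℝ) < (p / n) ^ ((α - α') / (1 + r)) := Real.rpow_pos_of_pos hq0 _
    field_simp
  rw [← key]
  exact hmeasure
end

section
/- Let Z be a random variable with E|Z|^s < ∞, where s ∈ (1,2), and let L ≥ E|Z|^s with L > 0. Then ∫_L^∞ x^{-2/s} E( Z²·1(|Z| ≤ x^{1/s}) ) dx ≤ ( 2s/(2−s)² + 2/(2−s) )·E|Z|^s. -/
open MeasureTheory

/-- inequality (6) in the proof of Lemma 1: for a random variable `Z` with
`E|Z|^s < ∞`, `s ∈ (1,2)`, and any `L ≥ E|Z|^s` with `L > 0`,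
`∫_L^∞ x^{-2/s} E(Z²·1(|Z| ≤ x^{1/s})) dx ≤ (2s/(2-s)² + 2/(2-s))·E|Z|^s`. -/
theorem truncated_second_moment_integral_bound
    {Ω : Type*} [MeasurableSpace Ω] (μ : Measure Ω) [IsProbabilityMeasure μ]
    (Z : Ω → ℝ) (hZ : Measurable Z) (s : ℝ) (hs1 : 1 < s) (hs2 : s < 2)
    (hint : Integrable (fun ω => |Z ω| ^ s) μ)
    (L : ℝ) (hL : 0 < L) (hLs : ∫ ω, |Z ω| ^ s ∂μ ≤ L) :
    ∫⁻ x in Set.Ici L, ENNReal.ofReal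
        (x ^ (-(2/s)) * ∫ ω, (if |Z ω| ≤ x ^ (1/s) then (Z ω) ^ 2 else 0) ∂μ) ≤
      ENNReal.ofReal
        ((2 * s / (2 - s) ^ 2 + 2 / (2 - s)) * ∫ ω, |Z ω| ^ s ∂μ) := by
  have hs0 : (0:ℝ) < s := by linarith
  have h2s : (0:ℝ) < 2 - s := by linarith
  have h2div : (1:ℝ) < 2 / s := (one_lt_div hs0).mpr hs2
  have hp : -(2/s) < -1 := by linarith
  have hE0 : 0 ≤ ∫ ω, |Z ω| ^ s ∂μ :=
    integral_nonneg fun ω => Real.rpow_nonneg (abs_nonneg _) s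
  -- basic facts about the truncated integrand
  have hgm : ∀ x : ℝ, Measurable (fun ω => if |Z ω| ≤ x ^ (1/s) then (Z ω) ^ 2 else 0) := by
    intro x
    exact Measurable.ite (measurableSet_le hZ.abs measurable_const)
      (hZ.pow_const 2) measurable_const
  have hgnn : ∀ x : ℝ, ∀ ω, 0 ≤ (if |Z ω| ≤ x ^ (1/s) then (Z ω) ^ 2 else 0) := by
    intro x ω; split <;> positivity
  have hgint : ∀ x : ℝ, Integrable (fun ω => if |Z ω| ≤ x ^ (1/s) then (Z ω) ^ 2 else 0) μ := by
    intro x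
    refine (integrable_const ((x ^ (1/s)) ^ 2)).mono' (hgm x).aestronglyMeasurable ?_
    filter_upwards with ω
    rw [Real.norm_eq_abs, abs_of_nonneg (hgnn x ω)]
    split
    · next h =>
        calc (Z ω) ^ 2 = |Z ω| ^ 2 := (sq_abs _).symm
          _ ≤ (x ^ (1/s)) ^ 2 := by
              have h0 : (0:ℝ) ≤ |Z ω| := abs_nonneg _
              nlinarith
    · positivity
  -- Step 1: rewrite the outer integrand as a double lintegral
  have step1 : ∫⁻ x in Set.Ici L, ENNReal.ofReal
        (x ^ (-(2/s)) * ∫ ω, (if |Z ω| ≤ x ^ (1/s) then (Z ω) ^ 2 else 0) ∂μ)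
      = ∫⁻ x in Set.Ici L, ∫⁻ ω, ENNReal.ofReal (x ^ (-(2/s)))
          * ENNReal.ofReal (if |Z ω| ≤ x ^ (1/s) then (Z ω) ^ 2 else 0) ∂μ := by
    refine setLIntegral_congr_fun measurableSet_Ici ?_
    intro x hx
    beta_reduce
    have hx0 : (0:ℝ) < x := lt_of_lt_of_le hL hx
    rw [ENNReal.ofReal_mul (Real.rpow_nonneg hx0.le _),
      ofReal_integral_eq_lintegral_ofReal (hgint x) (Filter.Eventually.of_forall (hgnn x)),
      ← lintegral_const_mul' _ _ ENNReal.ofReal_ne_top]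
  -- measurability for Tonelli
  have hmeasG : Measurable (fun z : ℝ × Ω =>
      ENNReal.ofReal (Real.exp (Real.log z.1 * (-(2/s))))
        * ENNReal.ofReal (if |Z z.2| ≤ z.1 ^ (1/s) then (Z z.2) ^ 2 else 0)) := by
    apply Measurable.mul (f := fun z : ℝ × Ω => ENNReal.ofReal (Real.exp (Real.log z.1 * (-(2/s)))))
      (g := fun z : ℝ × Ω => ENNReal.ofReal (if |Z z.2| ≤ z.1 ^ (1/s) then (Z z.2) ^ 2 else 0))
    · exact (Real.measurable_exp.comp ((Real.measurable_log.comp measurable_fst).mul_const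
        _)).ennreal_ofReal
    · refine Measurable.ennreal_ofReal ?_
      refine Measurable.ite ?_ ((hZ.comp measurable_snd).pow_const 2) measurable_const
      exact measurableSet_le ((hZ.comp measurable_snd).abs)
        ((Real.continuous_rpow_const (by positivity)).measurable.comp measurable_fst)
  have hae : ∀ᵐ z ∂((volume.restrict (Set.Ici L)).prod μ), L ≤ z.1 := by
    rw [Filter.eventually_iff, mem_ae_iff]
    apply measure_mono_null (fun z hz => Set.mem_prod.mpr ⟨hz, Set.mem_univ _⟩ :
      _ ⊆ {x : ℝ | ¬ L ≤ x} ×ˢ Set.univ)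
    · rw [Measure.prod_prod]
      have h1 : {x : ℝ | ¬ L ≤ x} = Set.Iio L := by ext y; simp [not_le]
      have h2 : Set.Iio L ∩ Set.Ici L = ∅ := by
        ext y
        simp only [Set.mem_inter_iff, Set.mem_Iio, Set.mem_Ici, Set.mem_empty_iff_false,
          iff_false, not_and, not_le]
        intro hy; linarith
      rw [h1, Measure.restrict_apply measurableSet_Iio, h2]
      simp
  have hF : AEMeasurable (Function.uncurry fun x ω =>
      ENNReal.ofReal (x ^ (-(2/s)))
        * ENNReal.ofReal (if |Z ω| ≤ x ^ (1/s) then (Z ω) ^ 2 else 0))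
      ((volume.restrict (Set.Ici L)).prod μ) := by
    refine hmeasG.aemeasurable.congr ?_
    filter_upwards [hae] with z hz
    have hz0 : (0:ℝ) < z.1 := lt_of_lt_of_le hL hz
    simp only [Function.uncurry]
    rw [Real.rpow_def_of_pos hz0 (-(2/s))]
  -- Step 2: for each ω, bound the inner x-integral
  have key : ∀ ω, (∫⁻ x in Set.Ici L, ENNReal.ofReal (x ^ (-(2/s)))
        * ENNReal.ofReal (if |Z ω| ≤ x ^ (1/s) then (Z ω) ^ 2 else 0))
      ≤ ENNReal.ofReal (s / (2 - s) * |Z ω| ^ s) := by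
    intro ω
    set a := |Z ω| ^ s with ha
    have ha0 : 0 ≤ a := Real.rpow_nonneg (abs_nonneg _) s
    set M := max a L with hM
    have hM0 : (0:ℝ) < M := lt_of_lt_of_le hL (le_max_right _ _)
    have hcond : ∀ x : ℝ, L ≤ x → ((|Z ω| ≤ x ^ (1/s)) ↔ a ≤ x) := by
      intro x hx
      have hx0 : (0:ℝ) < x := lt_of_lt_of_le hL hx
      have hxs : (x ^ (1/s)) ^ s = x := by
        rw [← Real.rpow_mul hx0.le, one_div, inv_mul_cancel₀ hs0.ne', Real.rpow_one]
      have h2 : (|Z ω| ≤ x ^ (1/s)) ↔ (|Z ω| ^ s ≤ (x ^ (1/s)) ^ s) :=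
        (Real.rpow_le_rpow_iff (abs_nonneg _) (Real.rpow_nonneg hx0.le _) hs0).symm
      rw [h2, hxs]
    have e0 : ∫⁻ x in Set.Ici L, ENNReal.ofReal (x ^ (-(2/s)))
          * ENNReal.ofReal (if |Z ω| ≤ x ^ (1/s) then (Z ω) ^ 2 else 0)
        = ∫⁻ x in Set.Ici L, (Set.Ici a).indicator
            (fun x => ENNReal.ofReal (x ^ (-(2/s))) * ENNReal.ofReal ((Z ω) ^ 2)) x := by
      refine setLIntegral_congr_fun measurableSet_Ici ?_
      intro x hx
      beta_reduce
      have hx' := hcond x hx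
      by_cases hax : a ≤ x
      · rw [if_pos (hx'.mpr hax), Set.indicator_apply, if_pos (Set.mem_Ici.mpr hax)]
      · rw [if_neg (fun h => hax (hx'.mp h)), Set.indicator_apply,
          if_neg (fun h => hax (Set.mem_Ici.mp h))]
        simp
    have e1 : ∫⁻ x in Set.Ici L, (Set.Ici a).indicator
          (fun x => ENNReal.ofReal (x ^ (-(2/s))) * ENNReal.ofReal ((Z ω) ^ 2)) x
        = ∫⁻ x in Set.Ioi M, ENNReal.ofReal (x ^ (-(2/s))) * ENNReal.ofReal ((Z ω) ^ 2) := by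
      rw [lintegral_indicator measurableSet_Ici,
        Measure.restrict_restrict measurableSet_Ici, Set.Ici_inter_Ici,
        setLIntegral_congr (Filter.EventuallyEq.symm Ioi_ae_eq_Ici)]
    have e2 : ∫⁻ x in Set.Ioi M, ENNReal.ofReal (x ^ (-(2/s)))
        = ENNReal.ofReal (-M ^ (-(2/s) + 1) / (-(2/s) + 1)) := by
      rw [← integral_Ioi_rpow_of_lt hp hM0]
      refine (ofReal_integral_eq_lintegral_ofReal (integrableOn_Ioi_rpow_of_lt hp hM0) ?_).symm
      filter_upwards [ae_restrict_mem measurableSet_Ioi] with x hx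
      exact Real.rpow_nonneg (le_of_lt (hM0.trans hx)) _
    have hq : -(2/s) + 1 < 0 := by linarith
    have hMq : (0:ℝ) < M ^ (-(2/s) + 1) := Real.rpow_pos_of_pos hM0 _
    have hval : -M ^ (-(2/s) + 1) / (-(2/s) + 1) = M ^ (-(2/s) + 1) * (s / (2 - s)) := by
      rw [div_eq_iff hq.ne]
      field_simp
      ring
    -- the key real inequality
    have main : M ^ (-(2/s) + 1) * (Z ω) ^ 2 ≤ a := by
      have hz2 : a ^ (2/s) = (Z ω) ^ 2 := by
        rw [ha, ← Real.rpow_mul (abs_nonneg _), show s * (2/s) = (2:ℝ) by field_simp,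
          show (2:ℝ) = ((2:ℕ):ℝ) by norm_num, Real.rpow_natCast, sq_abs]
      rw [← hz2]
      rcases eq_or_lt_of_le ha0 with h0 | hapos
      · rw [← h0, Real.zero_rpow (by positivity : (2:ℝ)/s ≠ 0), mul_zero]
      · have f1 : a ^ (2/s) = a * a ^ (2/s - 1) := by
          nth_rewrite 2 [← Real.rpow_one a]
          rw [← Real.rpow_add hapos, show (1:ℝ) + (2/s - 1) = 2/s by ring]
        have f2 : a ^ (2/s - 1) ≤ M ^ (2/s - 1) :=
          Real.rpow_le_rpow ha0 (le_max_left _ _) (by linarith)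
        have f3 : M ^ (2/s - 1) * M ^ (-(2/s) + 1) = 1 := by
          rw [← Real.rpow_add hM0, show (2/s - 1) + (-(2/s) + 1) = 0 by ring, Real.rpow_zero]
        calc M ^ (-(2/s) + 1) * a ^ (2/s) = a * (a ^ (2/s - 1) * M ^ (-(2/s) + 1)) := by
              rw [f1]; ring
          _ ≤ a * (M ^ (2/s - 1) * M ^ (-(2/s) + 1)) := by
              apply mul_le_mul_of_nonneg_left _ hapos.le
              exact mul_le_mul_of_nonneg_right f2 hMq.le
          _ = a := by rw [f3, mul_one]
    calc (∫⁻ x in Set.Ici L, ENNReal.ofReal (x ^ (-(2/s)))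
          * ENNReal.ofReal (if |Z ω| ≤ x ^ (1/s) then (Z ω) ^ 2 else 0))
        = ∫⁻ x in Set.Ioi M, ENNReal.ofReal (x ^ (-(2/s))) * ENNReal.ofReal ((Z ω) ^ 2) := by
          rw [e0, e1]
      _ = (∫⁻ x in Set.Ioi M, ENNReal.ofReal (x ^ (-(2/s)))) * ENNReal.ofReal ((Z ω) ^ 2) :=
          lintegral_mul_const' _ _ ENNReal.ofReal_ne_top
      _ = ENNReal.ofReal ((M ^ (-(2/s) + 1) * (s / (2 - s))) * (Z ω) ^ 2) := by
          rw [e2, hval, ← ENNReal.ofReal_mul (by positivity)]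
      _ ≤ ENNReal.ofReal (s / (2 - s) * |Z ω| ^ s) := by
          apply ENNReal.ofReal_le_ofReal
          calc M ^ (-(2/s) + 1) * (s / (2 - s)) * (Z ω) ^ 2
              = s / (2 - s) * (M ^ (-(2/s) + 1) * (Z ω) ^ 2) := by ring
            _ ≤ s / (2 - s) * a :=
                mul_le_mul_of_nonneg_left main (by positivity)
  -- put it together
  rw [step1, lintegral_lintegral_swap hF]
  calc (∫⁻ ω, (∫⁻ x in Set.Ici L, ENNReal.ofReal (x ^ (-(2/s)))
        * ENNReal.ofReal (if |Z ω| ≤ x ^ (1/s) then (Z ω) ^ 2 else 0)) ∂μ)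
      ≤ ∫⁻ ω, ENNReal.ofReal (s / (2 - s) * |Z ω| ^ s) ∂μ := lintegral_mono key
    _ = ENNReal.ofReal (∫ ω, s / (2 - s) * |Z ω| ^ s ∂μ) :=
        (ofReal_integral_eq_lintegral_ofReal (hint.const_mul _)
          (Filter.Eventually.of_forall fun ω =>
            mul_nonneg (by positivity) (Real.rpow_nonneg (abs_nonneg _) _))).symm
    _ ≤ ENNReal.ofReal ((2 * s / (2 - s) ^ 2 + 2 / (2 - s)) * ∫ ω, |Z ω| ^ s ∂μ) := by
        rw [integral_const_mul]
        apply ENNReal.ofReal_le_ofReal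
        apply mul_le_mul_of_nonneg_right _ hE0
        have h1 : s / (2 - s) ≤ 2 * s / (2 - s) ^ 2 := by
          rw [div_le_div_iff₀ h2s (by positivity)]
          nlinarith
        have h2' : (0:ℝ) ≤ 2 / (2 - s) := by positivity
        linarith
end

section
/- Let {X_n, n≥1} satisfy the φ-mixing condition (1) with rate r>2 and constant C>0, and the moment condition (2) with exponent α ∈ (0,1) and ν_α = sup_n E|X_n|^{1+α}. Let b>0 and Y_k = X_k·1(|X_k|≤b) − E(X_k·1(|X_k|≤b)), and φ = Σ_{m=1}^∞ φ(m)^{1/2}. Then for any integers m≥1 and i≥1, the block sum ξ = Σ_{j=1}^m Y_{i+j} satisfies E(ξ²) ≤ m·ν_α·(1+4φ)·b^{1−α}. -/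
open MeasureTheory ProbabilityTheory Finset

set_option linter.unusedSectionVars false


section Decomp

variable {Ω : Type*} [MeasurableSpace Ω] (μ : Measure Ω) [IsProbabilityMeasure μ]

lemma integral_decomp (f g : Ω → ℝ) (hf : Measurable f) (hg : Measurable g)
    (sf sg : Finset ℝ) (hsf : ∀ x, f x ∈ sf) (hsg : ∀ x, g x ∈ sg) (H : ℝ → ℝ → ℝ) :
    ∫ x, H (f x) (g x) ∂μ =
      ∑ a ∈ sf, ∑ b ∈ sg, H a b * (μ (g ⁻¹' {b} ∩ f ⁻¹' {a})).toReal := by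
  classical
  have hpt : ∀ x, H (f x) (g x) =
      ∑ a ∈ sf, ∑ b ∈ sg, (g ⁻¹' {b} ∩ f ⁻¹' {a}).indicator (fun _ => H a b) x := by
    intro x
    have h1 : ∀ a b : ℝ, (g ⁻¹' {b} ∩ f ⁻¹' {a}).indicator (fun _ => H a b) x
        = if g x = b ∧ f x = a then H a b else 0 := by
      intro a b
      by_cases h : g x = b ∧ f x = a
      · rw [Set.indicator_of_mem (by simpa using h), if_pos h]
      · rw [Set.indicator_of_notMem (by simpa using h), if_neg h]
    simp_rw [h1]
    have h2 : ∀ a : ℝ, ∑ b ∈ sg, (if g x = b ∧ f x = a then H a b else 0)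
        = if f x = a then H a (g x) else 0 := by
      intro a
      by_cases h : f x = a
      · simp only [h, and_true]
        rw [Finset.sum_ite_eq sg (g x) (fun b => H a b)]
        simp [hsg x]
      · simp [h]
    simp_rw [h2]
    rw [Finset.sum_ite_eq sf (f x) (fun a => H a (g x))]
    simp [hsf x]
  have hmeas : ∀ a b : ℝ, MeasurableSet (g ⁻¹' {b} ∩ f ⁻¹' {a}) :=
    fun a b => (hg (measurableSet_singleton b)).inter (hf (measurableSet_singleton a))
  calc ∫ x, H (f x) (g x) ∂μ
      = ∫ x, ∑ a ∈ sf, ∑ b ∈ sg,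
          (g ⁻¹' {b} ∩ f ⁻¹' {a}).indicator (fun _ => H a b) x ∂μ := by
        exact integral_congr_ae (Filter.Eventually.of_forall hpt)
    _ = ∑ a ∈ sf, ∑ b ∈ sg, H a b * (μ (g ⁻¹' {b} ∩ f ⁻¹' {a})).toReal := by
        rw [integral_finset_sum _ (fun a _ => integrable_finset_sum _
          (fun b _ => (integrable_const (H a b)).indicator (hmeas a b)))]
        refine Finset.sum_congr rfl fun a _ => ?_
        rw [integral_finset_sum _ (fun b _ => (integrable_const (H a b)).indicator (hmeas a b))]
        refine Finset.sum_congr rfl fun b _ => ?_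
        rw [integral_indicator_const _ (hmeas a b), smul_eq_mul, mul_comm, measureReal_def]

end Decomp

section Cov

lemma sum_sqrt_CS {ι : Type*} (s : Finset ι) (u v : ι → ℝ)
    (hu : ∀ i, 0 ≤ u i) (hv : ∀ i, 0 ≤ v i) :
    ∑ i ∈ s, u i * v i ≤ Real.sqrt (∑ i ∈ s, u i ^ 2) * Real.sqrt (∑ i ∈ s, v i ^ 2) := by
  have h := Finset.sum_mul_sq_le_sq_mul_sq s u v
  have h0 : 0 ≤ ∑ i ∈ s, u i * v i := Finset.sum_nonneg fun i _ => mul_nonneg (hu i) (hv i)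
  calc ∑ i ∈ s, u i * v i = Real.sqrt ((∑ i ∈ s, u i * v i) ^ 2) := (Real.sqrt_sq h0).symm
    _ ≤ Real.sqrt ((∑ i ∈ s, u i ^ 2) * ∑ i ∈ s, v i ^ 2) := Real.sqrt_le_sqrt h
    _ = _ := Real.sqrt_mul (Finset.sum_nonneg fun i _ => sq_nonneg _) _

variable {Ω : Type*} [m0 : MeasurableSpace Ω] (μ : Measure Ω) [IsProbabilityMeasure μ]

set_option maxHeartbeats 1000000 in
lemma cov_simple {F G : MeasurableSpace Ω} (hF : F ≤ m0) (hG : G ≤ m0)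
    (φ0 : ℝ) (hφ0 : 0 ≤ φ0)
    (Hφ : ∀ A B : Set Ω, MeasurableSet[F] A → MeasurableSet[G] B →
      |(μ (B ∩ A)).toReal - (μ A).toReal * (μ B).toReal| ≤ φ0 * (μ A).toReal)
    (f g : Ω → ℝ) (hf : Measurable[F] f) (hg : Measurable[G] g)
    (sf sg : Finset ℝ) (hsf : ∀ x, f x ∈ sf) (hsg : ∀ x, g x ∈ sg) :
    |∫ x, f x * g x ∂μ - (∫ x, f x ∂μ) * ∫ x, g x ∂μ| ≤
      2 * Real.sqrt φ0 * Real.sqrt (∫ x, f x ^ 2 ∂μ) * Real.sqrt (∫ x, g x ^ 2 ∂μ) := by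
  classical
  have hf0 : @Measurable Ω ℝ m0 _ f := hf.mono hF le_rfl
  have hg0 : @Measurable Ω ℝ m0 _ g := hg.mono hG le_rfl
  
  set P : ℝ → ℝ → ℝ := fun a b => (μ (g ⁻¹' {b} ∩ f ⁻¹' {a})).toReal with hP
  set pa : ℝ → ℝ := fun a => (μ (f ⁻¹' {a})).toReal with hpa
  set qb : ℝ → ℝ := fun b => (μ (g ⁻¹' {b})).toReal with hqb
  set D : ℝ → ℝ → ℝ := fun a b => P a b - pa a * qb b with hD
  have hPnn : ∀ a b, 0 ≤ P a b := fun a b => ENNReal.toReal_nonneg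
  have hpann : ∀ a, 0 ≤ pa a := fun a => ENNReal.toReal_nonneg
  have hqbnn : ∀ b, 0 ≤ qb b := fun b => ENNReal.toReal_nonneg
  have hgdisj : ∀ (s : Finset ℝ) (A : Set Ω), (↑s : Set ℝ).Pairwise
      (Function.onFun Disjoint fun b => g ⁻¹' {b} ∩ A) := by
    intro s A b _ b' _ hbb'
    simp only [Function.onFun, Set.disjoint_left]
    rintro x ⟨hx1, -⟩ ⟨hx2, -⟩
    exact hbb' ((Set.mem_singleton_iff.mp hx1).symm.trans (Set.mem_singleton_iff.mp hx2))
  have hfdisj : ∀ (s : Finset ℝ) (A : Set Ω), (↑s : Set ℝ).Pairwise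
      (Function.onFun Disjoint fun a => A ∩ f ⁻¹' {a}) := by
    intro s A a _ a' _ haa'
    simp only [Function.onFun, Set.disjoint_left]
    rintro x ⟨-, hx1⟩ ⟨-, hx2⟩
    exact haa' ((Set.mem_singleton_iff.mp hx1).symm.trans (Set.mem_singleton_iff.mp hx2))
  -- sum of P over b ∈ s gives measure of union ∩ fiber of f
  have hsumb : ∀ (a : ℝ) (s : Finset ℝ),
      ∑ b ∈ s, P a b = (μ ((⋃ b ∈ s, g ⁻¹' {b}) ∩ f ⁻¹' {a})).toReal := by
    intro a s
    have : (⋃ b ∈ s, g ⁻¹' {b}) ∩ f ⁻¹' {a} = ⋃ b ∈ s, (g ⁻¹' {b} ∩ f ⁻¹' {a}) := by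
      ext x; simp only [Set.mem_inter_iff, Set.mem_iUnion, Set.mem_preimage]; tauto
    rw [this, measure_biUnion_finset (hgdisj s _)
      (fun b _ => (hg0 (measurableSet_singleton b)).inter (hf0 (measurableSet_singleton a))),
      ENNReal.toReal_sum (fun b _ => measure_ne_top μ _)]
  have hsuma : ∀ (b : ℝ) (s : Finset ℝ),
      ∑ a ∈ s, P a b = (μ (g ⁻¹' {b} ∩ ⋃ a ∈ s, f ⁻¹' {a})).toReal := by
    intro b s
    have : g ⁻¹' {b} ∩ (⋃ a ∈ s, f ⁻¹' {a}) = ⋃ a ∈ s, (g ⁻¹' {b} ∩ f ⁻¹' {a}) := by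
      ext x; simp only [Set.mem_inter_iff, Set.mem_iUnion, Set.mem_preimage]; tauto
    rw [this, measure_biUnion_finset (by
        intro a ha a' ha' haa'
        simp only [Function.onFun, Set.disjoint_left]
        rintro x ⟨-, hx1⟩ ⟨-, hx2⟩
        exact haa' ((Set.mem_singleton_iff.mp hx1).symm.trans (Set.mem_singleton_iff.mp hx2)))
      (fun a _ => (hg0 (measurableSet_singleton b)).inter (hf0 (measurableSet_singleton a))),
      ENNReal.toReal_sum (fun a _ => measure_ne_top μ _)]
  have hsums : ∀ (s : Finset ℝ), ∑ b ∈ s, qb b = (μ (⋃ b ∈ s, g ⁻¹' {b})).toReal := by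
    intro s
    rw [measure_biUnion_finset (by
        intro b _ b' _ hbb'
        simp only [Function.onFun, Set.disjoint_left]
        rintro x hx1 hx2
        exact hbb' ((Set.mem_singleton_iff.mp hx1).symm.trans (Set.mem_singleton_iff.mp hx2)))
      (fun b _ => hg0 (measurableSet_singleton b)),
      ENNReal.toReal_sum (fun b _ => measure_ne_top μ _)]
  have Ppa : ∀ a, ∑ b ∈ sg, P a b = pa a := by
    intro a
    rw [hsumb a sg]
    have : (⋃ b ∈ sg, g ⁻¹' {b}) = Set.univ := by
      ext x; simp only [Set.mem_iUnion, Set.mem_univ, iff_true]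
      exact ⟨g x, hsg x, rfl⟩
    rw [this, Set.univ_inter]
  have Pqb : ∀ b, ∑ a ∈ sf, P a b = qb b := by
    intro b
    rw [hsuma b sf]
    have : (⋃ a ∈ sf, f ⁻¹' {a}) = Set.univ := by
      ext x; simp only [Set.mem_iUnion, Set.mem_univ, iff_true]
      exact ⟨f x, hsf x, rfl⟩
    rw [this, Set.inter_univ]
  -- key: partial sums of D over subsets of sg are bounded
  have key : ∀ a : ℝ, ∀ s : Finset ℝ, s ⊆ sg → |∑ b ∈ s, D a b| ≤ φ0 * pa a := by
    intro a s _
    have h1 : ∑ b ∈ s, D a b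
        = (μ ((⋃ b ∈ s, g ⁻¹' {b}) ∩ f ⁻¹' {a})).toReal
          - pa a * (μ (⋃ b ∈ s, g ⁻¹' {b})).toReal := by
      rw [Finset.sum_sub_distrib, hsumb a s, ← Finset.mul_sum, hsums s]
    rw [h1]
    exact Hφ (f ⁻¹' {a}) (⋃ b ∈ s, g ⁻¹' {b}) (hf (measurableSet_singleton a))
      (s.measurableSet_biUnion (fun b _ => hg (measurableSet_singleton b)))
  have K1 : ∀ a : ℝ, ∑ b ∈ sg, |D a b| ≤ 2 * (φ0 * pa a) := by
    intro a
    rw [← Finset.sum_filter_add_sum_filter_not sg (fun b => 0 ≤ D a b)]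
    have e1 : ∑ b ∈ sg.filter (fun b => 0 ≤ D a b), |D a b|
        = ∑ b ∈ sg.filter (fun b => 0 ≤ D a b), D a b := by
      refine Finset.sum_congr rfl fun b hb => abs_of_nonneg (Finset.mem_filter.mp hb).2
    have e2 : ∑ b ∈ sg.filter (fun b => ¬ 0 ≤ D a b), |D a b|
        = -∑ b ∈ sg.filter (fun b => ¬ 0 ≤ D a b), D a b := by
      rw [← Finset.sum_neg_distrib]
      refine Finset.sum_congr rfl fun b hb => abs_of_neg
        (lt_of_not_ge (Finset.mem_filter.mp hb).2)
    rw [e1, e2, two_mul]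
    gcongr ?_ + ?_
    · exact le_trans (le_abs_self _) (key a _ (Finset.filter_subset _ _))
    · exact le_trans (neg_le_abs _) (key a _ (Finset.filter_subset _ _))
  have sum_pa : ∑ a ∈ sf, pa a = 1 := by
    have := Pqb  -- not needed; direct:
    have h : ∑ a ∈ sf, pa a = ∑ a ∈ sf, ∑ b ∈ sg, P a b := by
      exact Finset.sum_congr rfl fun a _ => (Ppa a).symm
    rw [h, Finset.sum_comm]
    have h2 : ∑ b ∈ sg, ∑ a ∈ sf, P a b = ∑ b ∈ sg, qb b :=
      Finset.sum_congr rfl fun b _ => Pqb b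
    rw [h2, hsums sg]
    have : (⋃ b ∈ sg, g ⁻¹' {b}) = Set.univ := by
      ext x; simp only [Set.mem_iUnion, Set.mem_univ, iff_true]
      exact ⟨g x, hsg x, rfl⟩
    rw [this]
    simp
  have K2 : ∀ b : ℝ, ∑ a ∈ sf, |D a b| ≤ 2 * qb b := by
    intro b
    have h1 : ∀ a, |D a b| ≤ P a b + pa a * qb b := by
      intro a
      refine le_trans (abs_sub _ _) ?_
      rw [abs_of_nonneg (hPnn a b), abs_of_nonneg (mul_nonneg (hpann a) (hqbnn b))]
    calc ∑ a ∈ sf, |D a b| ≤ ∑ a ∈ sf, (P a b + pa a * qb b) :=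
          Finset.sum_le_sum fun a _ => h1 a
      _ = qb b + (∑ a ∈ sf, pa a) * qb b := by
          rw [Finset.sum_add_distrib, Pqb b, ← Finset.sum_mul]
      _ = 2 * qb b := by rw [sum_pa]; ring

  -- integral identities
  have Ef : ∫ x, f x ∂μ = ∑ a ∈ sf, a * pa a := by
    have h := @integral_decomp Ω m0 μ ‹_› f g hf0 hg0 sf sg hsf hsg (fun a _ => a)
    rw [h]
    refine Finset.sum_congr rfl fun a _ => ?_
    rw [← Finset.mul_sum, Ppa a]
  have Ef2 : ∫ x, f x ^ 2 ∂μ = ∑ a ∈ sf, a ^ 2 * pa a := by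
    have h := @integral_decomp Ω m0 μ ‹_› f g hf0 hg0 sf sg hsf hsg (fun a _ => a ^ 2)
    rw [h]
    refine Finset.sum_congr rfl fun a _ => ?_
    rw [← Finset.mul_sum, Ppa a]
  have Eg : ∫ x, g x ∂μ = ∑ b ∈ sg, b * qb b := by
    have h := @integral_decomp Ω m0 μ ‹_› f g hf0 hg0 sf sg hsf hsg (fun _ b => b)
    rw [h, Finset.sum_comm]
    refine Finset.sum_congr rfl fun b _ => ?_
    rw [← Finset.mul_sum, Pqb b]
  have Eg2 : ∫ x, g x ^ 2 ∂μ = ∑ b ∈ sg, b ^ 2 * qb b := by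
    have h := @integral_decomp Ω m0 μ ‹_› f g hf0 hg0 sf sg hsf hsg (fun _ b => b ^ 2)
    rw [h, Finset.sum_comm]
    refine Finset.sum_congr rfl fun b _ => ?_
    rw [← Finset.mul_sum, Pqb b]
  have Efg : ∫ x, f x * g x ∂μ = ∑ a ∈ sf, ∑ b ∈ sg, (a * b) * P a b := by
    have h := @integral_decomp Ω m0 μ ‹_› f g hf0 hg0 sf sg hsf hsg (fun a b => a * b)
    exact h
  have covid : ∫ x, f x * g x ∂μ - (∫ x, f x ∂μ) * ∫ x, g x ∂μ
      = ∑ a ∈ sf, ∑ b ∈ sg, a * b * D a b := by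
    rw [Efg, Ef, Eg, Finset.sum_mul_sum, ← Finset.sum_sub_distrib]
    refine Finset.sum_congr rfl fun a _ => ?_
    rw [← Finset.sum_sub_distrib]
    refine Finset.sum_congr rfl fun b _ => ?_
    simp only [hD]
    ring
  set R : ℝ → ℝ := fun a => Real.sqrt (∑ b ∈ sg, b ^ 2 * |D a b|) with hR
  have step1 : ∀ a, ∑ b ∈ sg, |a| * (|b| * |D a b|)
      ≤ |a| * (R a * Real.sqrt (2 * (φ0 * pa a))) := by
    intro a
    rw [← Finset.mul_sum]
    refine mul_le_mul_of_nonneg_left ?_ (abs_nonneg a)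
    have hcs := sum_sqrt_CS sg (fun b => |b| * Real.sqrt |D a b|) (fun b => Real.sqrt |D a b|)
      (fun b => mul_nonneg (abs_nonneg b) (Real.sqrt_nonneg _)) (fun b => Real.sqrt_nonneg _)
    have e0 : ∀ b : ℝ, (|b| * Real.sqrt |D a b|) * Real.sqrt |D a b| = |b| * |D a b| := by
      intro b; rw [mul_assoc, Real.mul_self_sqrt (abs_nonneg _)]
    have e1 : ∑ b ∈ sg, (|b| * Real.sqrt |D a b|) ^ 2 = ∑ b ∈ sg, b ^ 2 * |D a b| :=
      Finset.sum_congr rfl fun b _ => by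
        rw [mul_pow, Real.sq_sqrt (abs_nonneg _), sq_abs]
    have e2 : ∑ b ∈ sg, (Real.sqrt |D a b|) ^ 2 = ∑ b ∈ sg, |D a b| :=
      Finset.sum_congr rfl fun b _ => Real.sq_sqrt (abs_nonneg _)
    calc ∑ b ∈ sg, |b| * |D a b|
        = ∑ b ∈ sg, (|b| * Real.sqrt |D a b|) * Real.sqrt |D a b| :=
          Finset.sum_congr rfl fun b _ => (e0 b).symm
      _ ≤ Real.sqrt (∑ b ∈ sg, (|b| * Real.sqrt |D a b|) ^ 2)
            * Real.sqrt (∑ b ∈ sg, (Real.sqrt |D a b|) ^ 2) := hcs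
      _ = R a * Real.sqrt (∑ b ∈ sg, |D a b|) := by rw [e1, e2, hR]
      _ ≤ R a * Real.sqrt (2 * (φ0 * pa a)) :=
          mul_le_mul_of_nonneg_left (Real.sqrt_le_sqrt (K1 a)) (Real.sqrt_nonneg _)
  have main1 : |∫ x, f x * g x ∂μ - (∫ x, f x ∂μ) * ∫ x, g x ∂μ|
      ≤ ∑ a ∈ sf, ∑ b ∈ sg, |a| * (|b| * |D a b|) := by
    rw [covid]
    refine le_trans (Finset.abs_sum_le_sum_abs _ _) (Finset.sum_le_sum fun a _ => ?_)
    refine le_trans (Finset.abs_sum_le_sum_abs _ _) (Finset.sum_le_sum fun b _ => ?_)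
    exact le_of_eq (by rw [abs_mul, abs_mul, mul_assoc])
  have step2 : ∑ a ∈ sf, |a| * (R a * Real.sqrt (2 * (φ0 * pa a)))
      = Real.sqrt (2 * φ0) * ∑ a ∈ sf, (|a| * Real.sqrt (pa a)) * R a := by
    rw [Finset.mul_sum]
    refine Finset.sum_congr rfl fun a _ => ?_
    rw [show (2:ℝ) * (φ0 * pa a) = (2 * φ0) * pa a by ring,
      Real.sqrt_mul (by positivity) (pa a)]
    ring
  have step3 : ∑ a ∈ sf, (|a| * Real.sqrt (pa a)) * R a
      ≤ Real.sqrt (∑ a ∈ sf, a ^ 2 * pa a)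
        * Real.sqrt (∑ a ∈ sf, ∑ b ∈ sg, b ^ 2 * |D a b|) := by
    have hcs := sum_sqrt_CS sf (fun a => |a| * Real.sqrt (pa a)) R
      (fun a => mul_nonneg (abs_nonneg a) (Real.sqrt_nonneg _)) (fun a => Real.sqrt_nonneg _)
    have e1 : ∑ a ∈ sf, (|a| * Real.sqrt (pa a)) ^ 2 = ∑ a ∈ sf, a ^ 2 * pa a :=
      Finset.sum_congr rfl fun a _ => by
        rw [mul_pow, Real.sq_sqrt (hpann a), sq_abs]
    have e2 : ∑ a ∈ sf, (R a) ^ 2 = ∑ a ∈ sf, ∑ b ∈ sg, b ^ 2 * |D a b| :=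
      Finset.sum_congr rfl fun a _ => Real.sq_sqrt
        (Finset.sum_nonneg fun b _ => mul_nonneg (sq_nonneg b) (abs_nonneg _))
    rw [e1, e2] at hcs
    exact hcs
  have step4 : ∑ a ∈ sf, ∑ b ∈ sg, b ^ 2 * |D a b| ≤ 2 * ∑ b ∈ sg, b ^ 2 * qb b := by
    rw [Finset.sum_comm, Finset.mul_sum]
    refine Finset.sum_le_sum fun b _ => ?_
    rw [← Finset.mul_sum]
    calc b ^ 2 * ∑ a ∈ sf, |D a b| ≤ b ^ 2 * (2 * qb b) :=
          mul_le_mul_of_nonneg_left (K2 b) (sq_nonneg b)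
      _ = 2 * (b ^ 2 * qb b) := by ring
  have hq2 : (0:ℝ) ≤ ∑ b ∈ sg, b ^ 2 * qb b :=
    Finset.sum_nonneg fun b _ => mul_nonneg (sq_nonneg b) (hqbnn b)
  calc |∫ x, f x * g x ∂μ - (∫ x, f x ∂μ) * ∫ x, g x ∂μ|
      ≤ ∑ a ∈ sf, ∑ b ∈ sg, |a| * (|b| * |D a b|) := main1
    _ ≤ ∑ a ∈ sf, |a| * (R a * Real.sqrt (2 * (φ0 * pa a))) :=
        Finset.sum_le_sum fun a _ => step1 a
    _ = Real.sqrt (2 * φ0) * ∑ a ∈ sf, (|a| * Real.sqrt (pa a)) * R a := step2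
    _ ≤ Real.sqrt (2 * φ0) * (Real.sqrt (∑ a ∈ sf, a ^ 2 * pa a)
          * Real.sqrt (∑ a ∈ sf, ∑ b ∈ sg, b ^ 2 * |D a b|)) :=
        mul_le_mul_of_nonneg_left step3 (Real.sqrt_nonneg _)
    _ ≤ Real.sqrt (2 * φ0) * (Real.sqrt (∑ a ∈ sf, a ^ 2 * pa a)
          * Real.sqrt (2 * ∑ b ∈ sg, b ^ 2 * qb b)) := by
        refine mul_le_mul_of_nonneg_left (mul_le_mul_of_nonneg_left
          (Real.sqrt_le_sqrt step4) (Real.sqrt_nonneg _)) (Real.sqrt_nonneg _)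
    _ = 2 * Real.sqrt φ0 * Real.sqrt (∫ x, f x ^ 2 ∂μ) * Real.sqrt (∫ x, g x ^ 2 ∂μ) := by
        rw [Ef2, Eg2, Real.sqrt_mul (by norm_num : (0:ℝ) ≤ 2) φ0,
          Real.sqrt_mul (by norm_num : (0:ℝ) ≤ 2) (∑ b ∈ sg, b ^ 2 * qb b)]
        have h2 : Real.sqrt 2 * Real.sqrt 2 = 2 := Real.mul_self_sqrt (by norm_num)
        linear_combination (Real.sqrt φ0 * Real.sqrt (∑ a ∈ sf, a ^ 2 * pa a) *
          Real.sqrt (∑ b ∈ sg, b ^ 2 * qb b)) * h2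


lemma approx_seq {Ω' : Type*} [M : MeasurableSpace Ω'] (f : Ω' → ℝ) (hf : Measurable f) :
    ∃ fn : ℕ → Ω' → ℝ, (∀ n, Measurable (fn n)) ∧
      (∀ n, ∃ s : Finset ℝ, ∀ x, fn n x ∈ s) ∧
      (∀ n x, |fn n x| ≤ |f x| + |f x|) ∧
      (∀ x, Filter.Tendsto (fun n => fn n x) Filter.atTop (nhds (f x))) := by
  refine ⟨fun n => SimpleFunc.approxOn f hf Set.univ 0 (Set.mem_univ 0) n,
    fun n => (SimpleFunc.approxOn f hf Set.univ 0 (Set.mem_univ 0) n).measurable,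
    fun n => ⟨(SimpleFunc.approxOn f hf Set.univ 0 (Set.mem_univ 0) n).range,
      fun x => SimpleFunc.mem_range_self _ x⟩,
    fun n x => by
      simpa [Real.norm_eq_abs] using
        SimpleFunc.norm_approxOn_zero_le hf (Set.mem_univ 0) x n,
    fun x => SimpleFunc.tendsto_approxOn hf (Set.mem_univ 0) (by simp)⟩

set_option maxHeartbeats 1000000 in
lemma cov_bound {F G : MeasurableSpace Ω} (hF : F ≤ m0) (hG : G ≤ m0)
    (φ0 : ℝ) (hφ0 : 0 ≤ φ0)
    (Hφ : ∀ A B : Set Ω, MeasurableSet[F] A → MeasurableSet[G] B →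
      |(μ (B ∩ A)).toReal - (μ A).toReal * (μ B).toReal| ≤ φ0 * (μ A).toReal)
    (f g : Ω → ℝ) (hf : Measurable[F] f) (hg : Measurable[G] g)
    (Cf Cg : ℝ) (hCf : ∀ x, |f x| ≤ Cf) (hCg : ∀ x, |g x| ≤ Cg) :
    |∫ x, f x * g x ∂μ - (∫ x, f x ∂μ) * ∫ x, g x ∂μ| ≤
      2 * Real.sqrt φ0 * Real.sqrt (∫ x, f x ^ 2 ∂μ) * Real.sqrt (∫ x, g x ^ 2 ∂μ) := by
  classical
  obtain ⟨fn, hfnF, hfns, hfnb', hfnt⟩ := @approx_seq Ω F f hf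
  obtain ⟨gn, hgnF, hgns, hgnb', hgnt⟩ := @approx_seq Ω G g hg
  have hfnm : ∀ n, @Measurable Ω ℝ m0 _ (fn n) := fun n => (hfnF n).mono hF le_rfl
  have hgnm : ∀ n, @Measurable Ω ℝ m0 _ (gn n) := fun n => (hgnF n).mono hG le_rfl
  have hfnb : ∀ n x, |fn n x| ≤ 2 * Cf := by
    intro n x
    calc |fn n x| ≤ |f x| + |f x| := hfnb' n x
      _ ≤ 2 * Cf := by have := hCf x; linarith
  have hgnb : ∀ n x, |gn n x| ≤ 2 * Cg := by
    intro n x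
    calc |gn n x| ≤ |g x| + |g x| := hgnb' n x
      _ ≤ 2 * Cg := by have := hCg x; linarith
  have Tfg : Filter.Tendsto (fun n => ∫ x, fn n x * gn n x ∂μ) Filter.atTop
      (nhds (∫ x, f x * g x ∂μ)) := by
    refine tendsto_integral_of_dominated_convergence (fun _ => (2 * Cf) * (2 * Cg))
      (fun n => ((hfnm n).mul (hgnm n)).aestronglyMeasurable) (integrable_const _)
      (fun n => Filter.Eventually.of_forall fun x => ?_)
      (Filter.Eventually.of_forall fun x => (hfnt x).mul (hgnt x))
    rw [Real.norm_eq_abs, abs_mul]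
    exact mul_le_mul (hfnb n x) (hgnb n x) (abs_nonneg _)
      (le_trans (abs_nonneg _) (hfnb n x))
  have Tf : Filter.Tendsto (fun n => ∫ x, fn n x ∂μ) Filter.atTop
      (nhds (∫ x, f x ∂μ)) := by
    refine tendsto_integral_of_dominated_convergence (fun _ => 2 * Cf)
      (fun n => (hfnm n).aestronglyMeasurable) (integrable_const _)
      (fun n => Filter.Eventually.of_forall fun x => ?_)
      (Filter.Eventually.of_forall fun x => hfnt x)
    rw [Real.norm_eq_abs]; exact hfnb n x
  have Tg : Filter.Tendsto (fun n => ∫ x, gn n x ∂μ) Filter.atTop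
      (nhds (∫ x, g x ∂μ)) := by
    refine tendsto_integral_of_dominated_convergence (fun _ => 2 * Cg)
      (fun n => (hgnm n).aestronglyMeasurable) (integrable_const _)
      (fun n => Filter.Eventually.of_forall fun x => ?_)
      (Filter.Eventually.of_forall fun x => hgnt x)
    rw [Real.norm_eq_abs]; exact hgnb n x
  have Tf2 : Filter.Tendsto (fun n => ∫ x, fn n x ^ 2 ∂μ) Filter.atTop
      (nhds (∫ x, f x ^ 2 ∂μ)) := by
    refine tendsto_integral_of_dominated_convergence (fun _ => (2 * Cf) ^ 2)
      (fun n => ((hfnm n).pow_const 2).aestronglyMeasurable) (integrable_const _)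
      (fun n => Filter.Eventually.of_forall fun x => ?_)
      (Filter.Eventually.of_forall fun x => (hfnt x).pow 2)
    rw [Real.norm_eq_abs, abs_pow]
    exact pow_le_pow_left₀ (abs_nonneg _) (hfnb n x) 2
  have Tg2 : Filter.Tendsto (fun n => ∫ x, gn n x ^ 2 ∂μ) Filter.atTop
      (nhds (∫ x, g x ^ 2 ∂μ)) := by
    refine tendsto_integral_of_dominated_convergence (fun _ => (2 * Cg) ^ 2)
      (fun n => ((hgnm n).pow_const 2).aestronglyMeasurable) (integrable_const _)
      (fun n => Filter.Eventually.of_forall fun x => ?_)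
      (Filter.Eventually.of_forall fun x => (hgnt x).pow 2)
    rw [Real.norm_eq_abs, abs_pow]
    exact pow_le_pow_left₀ (abs_nonneg _) (hgnb n x) 2
  have ineq : ∀ n, |∫ x, fn n x * gn n x ∂μ - (∫ x, fn n x ∂μ) * ∫ x, gn n x ∂μ| ≤
      2 * Real.sqrt φ0 * Real.sqrt (∫ x, fn n x ^ 2 ∂μ)
        * Real.sqrt (∫ x, gn n x ^ 2 ∂μ) := by
    intro n
    obtain ⟨sfn, hsfn⟩ := hfns n
    obtain ⟨sgn, hsgn⟩ := hgns n
    exact @cov_simple Ω m0 μ ‹_› F G hF hG φ0 hφ0 Hφ (fn n) (gn n) (hfnF n) (hgnF n) sfn sgn hsfn hsgn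
  have TL : Filter.Tendsto
      (fun n => |∫ x, fn n x * gn n x ∂μ - (∫ x, fn n x ∂μ) * ∫ x, gn n x ∂μ|)
      Filter.atTop (nhds (|∫ x, f x * g x ∂μ - (∫ x, f x ∂μ) * ∫ x, g x ∂μ|)) :=
    (Tfg.sub (Tf.mul Tg)).abs
  have TR : Filter.Tendsto
      (fun n => 2 * Real.sqrt φ0 * Real.sqrt (∫ x, fn n x ^ 2 ∂μ)
        * Real.sqrt (∫ x, gn n x ^ 2 ∂μ))
      Filter.atTop (nhds (2 * Real.sqrt φ0 * Real.sqrt (∫ x, f x ^ 2 ∂μ)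
        * Real.sqrt (∫ x, g x ^ 2 ∂μ))) :=
    ((tendsto_const_nhds.mul Tf2.sqrt).mul Tg2.sqrt)
  exact le_of_tendsto_of_tendsto' TL TR ineq

end Cov
section Phi
variable {Ω : Type*} [m0 : MeasurableSpace Ω] (μ : Measure Ω) [IsProbabilityMeasure μ]
  (X : ℕ → Ω → ℝ)

lemma phiCoef_bddAbove (m : ℕ) : BddAbove {x : ℝ | ∃ k : ℕ, 1 ≤ k ∧ ∃ A B : Set Ω,
    MeasurableSet[⨆ i ∈ Set.Icc 1 k, MeasurableSpace.comap (X i) inferInstance] A ∧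
    MeasurableSet[⨆ i ∈ Set.Ici (k + m), MeasurableSpace.comap (X i) inferInstance] B ∧
    0 < μ A ∧
    x = |(μ (B ∩ A)).toReal / (μ A).toReal - (μ B).toReal|} := by
  refine ⟨1, ?_⟩
  rintro x ⟨k, hk, A, B, hA, hB, hA0, rfl⟩
  have haT : (μ A) ≠ ⊤ := measure_ne_top μ A
  have ha : 0 < (μ A).toReal := ENNReal.toReal_pos (ne_of_gt hA0) haT
  have hp : (μ (B ∩ A)).toReal ≤ (μ A).toReal :=
    ENNReal.toReal_mono haT (measure_mono Set.inter_subset_right)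
  have hs0 : 0 ≤ (μ B).toReal := ENNReal.toReal_nonneg
  have hs1 : (μ B).toReal ≤ 1 := by
    have := ENNReal.toReal_mono (by norm_num) (prob_le_one (μ := μ) (s := B))
    simpa using this
  have hd : (μ (B ∩ A)).toReal / (μ A).toReal ≤ 1 := by
    rw [div_le_one ha]; exact hp
  have hd0 : 0 ≤ (μ (B ∩ A)).toReal / (μ A).toReal :=
    div_nonneg ENNReal.toReal_nonneg ha.le
  rw [abs_sub_le_iff]
  constructor <;> linarith

lemma phiCoef_nonneg (m : ℕ) : 0 ≤ phiCoef μ X m := by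
  refine le_csSup (phiCoef_bddAbove μ X m) ?_
  refine ⟨1, le_rfl, Set.univ, Set.univ, MeasurableSet.univ, MeasurableSet.univ, by simp, ?_⟩
  simp [measure_univ]

lemma phiCoef_le (m k : ℕ) (hk : 1 ≤ k) (A B : Set Ω)
    (hA : MeasurableSet[⨆ i ∈ Set.Icc 1 k, MeasurableSpace.comap (X i) inferInstance] A)
    (hB : MeasurableSet[⨆ i ∈ Set.Ici (k + m), MeasurableSpace.comap (X i) inferInstance] B)
    (hA0 : 0 < μ A) :
    |(μ (B ∩ A)).toReal / (μ A).toReal - (μ B).toReal| ≤ phiCoef μ X m :=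
  le_csSup (phiCoef_bddAbove μ X m) ⟨k, hk, A, B, hA, hB, hA0, rfl⟩

lemma phiCoef_cov_form (m k : ℕ) (hk : 1 ≤ k) (A B : Set Ω)
    (hA : MeasurableSet[⨆ i ∈ Set.Icc 1 k, MeasurableSpace.comap (X i) inferInstance] A)
    (hB : MeasurableSet[⨆ i ∈ Set.Ici (k + m), MeasurableSpace.comap (X i) inferInstance] B) :
    |(μ (B ∩ A)).toReal - (μ A).toReal * (μ B).toReal| ≤ phiCoef μ X m * (μ A).toReal := by
  by_cases h0 : μ A = 0
  · have hBA : μ (B ∩ A) = 0 := measure_mono_null Set.inter_subset_right h0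
    simp [h0, hBA]
  · have hA0 : 0 < μ A := lt_of_le_of_ne zero_le (Ne.symm h0)
    have ha : 0 < (μ A).toReal := ENNReal.toReal_pos h0 (measure_ne_top μ A)
    have h := phiCoef_le μ X m k hk A B hA hB hA0
    have he : (μ (B ∩ A)).toReal - (μ A).toReal * (μ B).toReal
        = ((μ (B ∩ A)).toReal / (μ A).toReal - (μ B).toReal) * (μ A).toReal := by
      field_simp
    rw [he, abs_mul, abs_of_pos ha]
    exact mul_le_mul_of_nonneg_right h ha.le

end Phi

section MainPartFacts
variable {Ω : Type*} [m0 : MeasurableSpace Ω] (μ : Measure Ω) [IsProbabilityMeasure μ]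

lemma integrable_of_bdd {f : Ω → ℝ} (hf : Measurable f) (M : ℝ) (hM : ∀ x, |f x| ≤ M) :
    Integrable f μ :=
  (integrable_const M).mono' hf.aestronglyMeasurable
    (Filter.Eventually.of_forall fun x => by rw [Real.norm_eq_abs]; exact hM x)

variable (X : ℕ → Ω → ℝ) (b : ℝ)

lemma trunc_meas (k : ℕ) (hX : Measurable (X k)) :
    Measurable (fun ω => if |X k ω| ≤ b then X k ω else 0) :=
  Measurable.ite (measurableSet_le hX.abs measurable_const) hX measurable_const

lemma trunc_bd (hb : 0 ≤ b) (k : ℕ) (ω : Ω) :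
    |if |X k ω| ≤ b then X k ω else 0| ≤ b := by
  by_cases h : |X k ω| ≤ b
  · rw [if_pos h]; exact h
  · rw [if_neg h]; simpa using hb

lemma trunc_int_bd (hb : 0 ≤ b) (k : ℕ) :
    |∫ ω', (if |X k ω'| ≤ b then X k ω' else 0) ∂μ| ≤ b := by
  have h := norm_integral_le_of_norm_le_const
    (C := b) (μ := μ) (f := fun ω' => if |X k ω'| ≤ b then X k ω' else 0)
    (Filter.Eventually.of_forall fun ω' => by rw [Real.norm_eq_abs]; exact trunc_bd X b hb k ω')
  simpa [Real.norm_eq_abs, measure_univ] using h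

lemma mainPart_bd (hb : 0 ≤ b) (k : ℕ) (ω : Ω) : |mainPart μ X b k ω| ≤ 2 * b := by
  unfold mainPart
  have h1 := trunc_bd X b hb k ω
  have h2 := trunc_int_bd μ X b hb k
  rw [abs_sub_le_iff]
  constructor <;> [skip; skip] <;> cases' abs_le.mp h1 with a1 a2 <;>
    cases' abs_le.mp h2 with c1 c2 <;> linarith

lemma mainPart_meas (k : ℕ) (hX : Measurable (X k)) : Measurable (mainPart μ X b k) :=
  ((trunc_meas X b k hX).sub measurable_const)

lemma mainPart_comap_meas (k : ℕ) :
    @Measurable Ω ℝ (MeasurableSpace.comap (X k) inferInstance) _ (mainPart μ X b k) := by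
  have ht : Measurable (fun y : ℝ => if |y| ≤ b then y else 0) :=
    Measurable.ite (measurableSet_le measurable_abs measurable_const)
      measurable_id measurable_const
  have hX : @Measurable Ω ℝ (MeasurableSpace.comap (X k) inferInstance) _ (X k) :=
    measurable_iff_comap_le.mpr le_rfl
  exact Measurable.sub (ht.comp hX) measurable_const

lemma mainPart_integral_zero (k : ℕ) (hX : Measurable (X k)) (hb : 0 ≤ b) :
    ∫ ω, mainPart μ X b k ω ∂μ = 0 := by
  unfold mainPart
  rw [integral_sub (integrable_of_bdd μ (trunc_meas X b k hX) b (trunc_bd X b hb k))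
    (integrable_const _), integral_const]
  simp [measure_univ]

lemma mainPart_sq_le (k : ℕ) (hX : Measurable (X k)) (hb : 0 ≤ b)
    (α : ℝ) (hα0 : 0 < α) (hα1 : α < 1)
    (hint : Integrable (fun ω => |X k ω| ^ (1 + α)) μ) :
    ∫ ω, (mainPart μ X b k ω) ^ 2 ∂μ ≤ b ^ (1 - α) * ∫ ω, |X k ω| ^ (1 + α) ∂μ := by
  set h : Ω → ℝ := fun ω => if |X k ω| ≤ b then X k ω else 0 with hh
  set c : ℝ := ∫ ω', h ω' ∂μ with hc
  have hmeas : Measurable h := trunc_meas X b k hX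
  have hbd : ∀ ω, |h ω| ≤ b := trunc_bd X b hb k
  have hint_h : Integrable h μ := integrable_of_bdd μ hmeas b hbd
  have hint_h2 : Integrable (fun ω => h ω ^ 2) μ :=
    integrable_of_bdd μ (hmeas.pow_const 2) (b ^ 2) (fun ω => by
      rw [abs_pow]; exact pow_le_pow_left₀ (abs_nonneg _) (hbd ω) 2)
  have step1 : ∫ ω, (mainPart μ X b k ω) ^ 2 ∂μ ≤ ∫ ω, h ω ^ 2 ∂μ := by
    have e : ∀ ω, (mainPart μ X b k ω) ^ 2 = h ω ^ 2 - (2 * c) * h ω + c ^ 2 := by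
      intro ω; unfold mainPart; rw [← hh, ← hc]; ring
    rw [integral_congr_ae (Filter.Eventually.of_forall e)]
    have i1 : Integrable (fun ω => h ω ^ 2 - 2 * c * h ω) μ :=
      hint_h2.sub (hint_h.const_mul (2 * c))
    have i2 : Integrable (fun x => 2 * c * h x) μ := hint_h.const_mul (2 * c)
    rw [integral_add i1 (integrable_const _), integral_sub hint_h2 i2,
      MeasureTheory.integral_const_mul, ← hc, integral_const]
    simp only [measure_univ, probReal_univ, ENNReal.toReal_one, one_smul, smul_eq_mul]
    nlinarith [sq_nonneg c]
  have step2 : ∫ ω, h ω ^ 2 ∂μ ≤ ∫ ω, b ^ (1 - α) * |X k ω| ^ (1 + α) ∂μ := by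
    refine integral_mono hint_h2 (hint.const_mul _) fun ω => ?_
    by_cases hcase : |X k ω| ≤ b
    · rw [hh]
      simp only [if_pos hcase]
      rcases eq_or_ne (X k ω) 0 with h0 | h0
      · simp [h0, Real.zero_rpow (by positivity : (1:ℝ) + α ≠ 0)]
      · have habs : 0 < |X k ω| := abs_pos.mpr h0
        calc X k ω ^ 2 = |X k ω| ^ (2:ℕ) := (sq_abs _).symm
          _ = |X k ω| ^ ((2:ℕ):ℝ) := (Real.rpow_natCast _ 2).symm
          _ = |X k ω| ^ ((1 + α) + (1 - α)) := by norm_num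
          _ = |X k ω| ^ (1 + α) * |X k ω| ^ (1 - α) := Real.rpow_add habs _ _
          _ ≤ |X k ω| ^ (1 + α) * b ^ (1 - α) := by
              refine mul_le_mul_of_nonneg_left ?_ (Real.rpow_nonneg (abs_nonneg _) _)
              exact Real.rpow_le_rpow (abs_nonneg _) hcase (by linarith)
          _ = b ^ (1 - α) * |X k ω| ^ (1 + α) := mul_comm _ _
    · rw [hh]
      simp only [if_neg hcase]
      norm_num
      positivity
  calc ∫ ω, (mainPart μ X b k ω) ^ 2 ∂μ ≤ ∫ ω, h ω ^ 2 ∂μ := step1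
    _ ≤ ∫ ω, b ^ (1 - α) * |X k ω| ^ (1 + α) ∂μ := step2
    _ = b ^ (1 - α) * ∫ ω, |X k ω| ^ (1 + α) ∂μ := MeasureTheory.integral_const_mul _ _

end MainPartFacts

section Summ
variable {Ω : Type*} [m0 : MeasurableSpace Ω] (μ : Measure Ω) [IsProbabilityMeasure μ]

lemma sqrt_phi_summable (X : ℕ → Ω → ℝ) (r C : ℝ) (hr : 2 < r) (hC : 0 < C)
    (hmix : ∀ m : ℕ, 1 ≤ m → phiCoef μ X m ≤ C * ((m : ℝ) + 1) ^ (-r)) :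
    Summable (fun d : ℕ => Real.sqrt (phiCoef μ X (d + 1))) := by
  have hbound : ∀ d : ℕ, Real.sqrt (phiCoef μ X (d + 1))
      ≤ Real.sqrt C * ((d:ℝ) + 2) ^ (-(r/2)) := by
    intro d
    have h1 : phiCoef μ X (d+1) ≤ C * (((d+1:ℕ) : ℝ) + 1) ^ (-r) := hmix (d+1) (by omega)
    have h2 : (((d+1:ℕ):ℝ) + 1) = (d:ℝ) + 2 := by push_cast; ring
    rw [h2] at h1
    calc Real.sqrt (phiCoef μ X (d+1)) ≤ Real.sqrt (C * ((d:ℝ)+2) ^ (-r)) :=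
          Real.sqrt_le_sqrt h1
      _ = Real.sqrt C * Real.sqrt (((d:ℝ)+2) ^ (-r)) := Real.sqrt_mul hC.le _
      _ = Real.sqrt C * ((d:ℝ)+2) ^ (-(r/2)) := by
          congr 1
          rw [Real.sqrt_eq_rpow, ← Real.rpow_mul (by positivity : (0:ℝ) ≤ (d:ℝ)+2)]
          congr 1
          ring
  refine Summable.of_nonneg_of_le (fun d => Real.sqrt_nonneg _) hbound ?_
  have h1 : Summable (fun d : ℕ => ((d:ℝ)) ^ (-(r/2))) :=
    Real.summable_nat_rpow.mpr (by linarith)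
  have h2 := (summable_nat_add_iff (f := fun n : ℕ => ((n:ℝ)) ^ (-(r/2))) 2).mpr h1
  refine (h2.mul_left (Real.sqrt C)).congr fun d => ?_
  push_cast
  ring_nf

end Summ

set_option maxHeartbeats 2000000 in
/-- block second-moment bound in the proof of Theorem 1: for the main parts
`Y_k = X_k·1(|X_k| ≤ b) - E(X_k·1(|X_k| ≤ b))`, any block sum `ξ = ∑_{j=1}^m Y_{i+j}`
satisfies `E(ξ²) ≤ m·να·(1+4φ)·b^{1-α}`, where `φ = ∑_{m≥1} φ(m)^{1/2}`. -/
theorem block_second_moment_bound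
    {Ω : Type*} [MeasurableSpace Ω] (μ : Measure Ω) [IsProbabilityMeasure μ]
    (X : ℕ → Ω → ℝ) (hmeas : ∀ n, Measurable (X n))
    (r C : ℝ) (hr : 2 < r) (hC : 0 < C)
    (hmix : ∀ m : ℕ, 1 ≤ m → phiCoef μ X m ≤ C * ((m : ℝ) + 1) ^ (-r))
    (α να : ℝ) (hα0 : 0 < α) (hα1 : α < 1)
    (hint : ∀ n : ℕ, 1 ≤ n → Integrable (fun ω => |X n ω| ^ (1 + α)) μ)
    (hbdd : BddAbove (Set.range fun n : ℕ => ∫ ω, |X (n + 1) ω| ^ (1 + α) ∂μ))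
    (hνα : να = ⨆ n : ℕ, ∫ ω, |X (n + 1) ω| ^ (1 + α) ∂μ) (hνpos : 0 < να)
    (φ : ℝ) (hφ : φ = phiSum μ X)
    (b : ℝ) (hb : 0 < b) :
    ∀ m i : ℕ, 1 ≤ m → 1 ≤ i →
      ∫ ω, (∑ j ∈ Finset.Icc 1 m, mainPart μ X b (i + j) ω) ^ 2 ∂μ ≤
        m * να * (1 + 4 * φ) * b ^ (1 - α) := by
  intro m i hm hi
  classical
  have hb0 : (0:ℝ) ≤ b := hb.le
  have hφnn : 0 ≤ φ := by
    rw [hφ]; exact tsum_nonneg (fun d => Real.sqrt_nonneg _)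
  have hsumm : Summable (fun d : ℕ => Real.sqrt (phiCoef μ X (d + 1))) :=
    sqrt_phi_summable μ X r C hr hC hmix
  have hKnn : (0:ℝ) ≤ να * b ^ (1 - α) := mul_nonneg hνpos.le (Real.rpow_nonneg hb0 _)
  have moment : ∀ k : ℕ, 1 ≤ k → ∫ ω, |X k ω| ^ (1 + α) ∂μ ≤ να := by
    intro k hk
    have hkk : k - 1 + 1 = k := by omega
    rw [← hkk, hνα]
    exact le_ciSup hbdd (k - 1)
  have Ysq : ∀ k : ℕ, 1 ≤ k →
      ∫ ω, (mainPart μ X b k ω) ^ 2 ∂μ ≤ να * b ^ (1 - α) := by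
    intro k hk
    calc ∫ ω, (mainPart μ X b k ω) ^ 2 ∂μ
        ≤ b ^ (1 - α) * ∫ ω, |X k ω| ^ (1 + α) ∂μ :=
          mainPart_sq_le μ X b k (hmeas k) hb0 α hα0 hα1 (hint k hk)
      _ ≤ b ^ (1 - α) * να :=
          mul_le_mul_of_nonneg_left (moment k hk) (Real.rpow_nonneg hb0 _)
      _ = να * b ^ (1 - α) := mul_comm _ _
  have Ybd : ∀ k ω, |mainPart μ X b k ω| ≤ 2 * b := fun k ω => mainPart_bd μ X b hb0 k ω
  have Ym : ∀ k, Measurable (mainPart μ X b k) := fun k => mainPart_meas μ X b k (hmeas k)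
  have Yprod_int : ∀ k k',
      Integrable (fun ω => mainPart μ X b k ω * mainPart μ X b k' ω) μ := by
    intro k k'
    refine integrable_of_bdd μ ((Ym k).mul (Ym k')) ((2*b)*(2*b)) (fun ω => ?_)
    rw [abs_mul]
    exact mul_le_mul (Ybd k ω) (Ybd k' ω) (abs_nonneg _) (by linarith)
  have hsub : ∀ S : Set ℕ,
      (⨆ l ∈ S, MeasurableSpace.comap (X l) inferInstance)
        ≤ (inferInstance : MeasurableSpace Ω) :=
    fun S => iSup₂_le fun l _ => Measurable.comap_le (hmeas l)
  have Ymem : ∀ (k : ℕ) (S : Set ℕ), k ∈ S →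
      @Measurable Ω ℝ (⨆ l ∈ S, MeasurableSpace.comap (X l) inferInstance) _
        (mainPart μ X b k) :=
    fun k S hk => (mainPart_comap_meas μ X b k).mono
      (le_biSup (fun l => MeasurableSpace.comap (X l) inferInstance) hk) le_rfl
  have cross : ∀ j j' : ℕ, 1 ≤ j → j < j' →
      ∫ ω, mainPart μ X b (i+j) ω * mainPart μ X b (i+j') ω ∂μ
        ≤ 2 * Real.sqrt (phiCoef μ X (j' - j)) * (να * b ^ (1 - α)) := by
    intro j j' hj hjj
    have hik : 1 ≤ i + j := by omega
    have hcov := @cov_bound Ω (inferInstance) μ (inferInstance)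
      (⨆ l ∈ Set.Icc 1 (i+j), MeasurableSpace.comap (X l) inferInstance)
      (⨆ l ∈ Set.Ici ((i+j) + (j'-j)), MeasurableSpace.comap (X l) inferInstance)
      (hsub _) (hsub _)
      (phiCoef μ X (j'-j)) (phiCoef_nonneg μ X _)
      (fun A B hA hB => phiCoef_cov_form μ X (j'-j) (i+j) hik A B hA hB)
      (mainPart μ X b (i+j)) (mainPart μ X b (i+j'))
      (Ymem (i+j) _ (by simp only [Set.mem_Icc]; omega))
      (Ymem (i+j') _ (by simp only [Set.mem_Ici]; omega))
      (2*b) (2*b) (Ybd _) (Ybd _)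
    rw [mainPart_integral_zero μ X b (i+j) (hmeas _) hb0, zero_mul, sub_zero] at hcov
    have hs1 : Real.sqrt (∫ ω, (mainPart μ X b (i+j) ω)^2 ∂μ)
        ≤ Real.sqrt (να * b^(1-α)) := Real.sqrt_le_sqrt (Ysq _ (by omega))
    have hs2 : Real.sqrt (∫ ω, (mainPart μ X b (i+j') ω)^2 ∂μ)
        ≤ Real.sqrt (να * b^(1-α)) := Real.sqrt_le_sqrt (Ysq _ (by omega))
    calc ∫ ω, mainPart μ X b (i+j) ω * mainPart μ X b (i+j') ω ∂μ
        ≤ |∫ ω, mainPart μ X b (i+j) ω * mainPart μ X b (i+j') ω ∂μ| := le_abs_self _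
      _ ≤ 2 * Real.sqrt (phiCoef μ X (j'-j))
            * Real.sqrt (∫ ω, (mainPart μ X b (i+j) ω)^2 ∂μ)
            * Real.sqrt (∫ ω, (mainPart μ X b (i+j') ω)^2 ∂μ) := hcov
      _ ≤ 2 * Real.sqrt (phiCoef μ X (j'-j)) * Real.sqrt (να * b^(1-α))
            * Real.sqrt (να * b^(1-α)) := by
          refine mul_le_mul (mul_le_mul_of_nonneg_left hs1 (by positivity)) hs2
            (Real.sqrt_nonneg _) (by positivity)
      _ = 2 * Real.sqrt (phiCoef μ X (j'-j)) * (να * b^(1-α)) := by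
          rw [mul_assoc, Real.mul_self_sqrt hKnn]
  have pair : ∀ j ∈ Finset.Icc 1 m, ∀ j' ∈ Finset.Icc 1 m,
      ∫ ω, mainPart μ X b (i+j) ω * mainPart μ X b (i+j') ω ∂μ ≤
        (if j = j' then (1:ℝ)
          else 2 * Real.sqrt (phiCoef μ X ((j'-j)+(j-j')))) * (να * b^(1-α)) := by
    intro j hj j' hj'
    simp only [Finset.mem_Icc] at hj hj'
    rcases lt_trichotomy j j' with h | h | h
    · rw [if_neg (by omega)]
      have e : (j'-j)+(j-j') = j'-j := by omega
      rw [e]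
      exact cross j j' (by omega) h
    · subst h
      rw [if_pos rfl, one_mul]
      have e : ∀ ω, mainPart μ X b (i+j) ω * mainPart μ X b (i+j) ω
          = (mainPart μ X b (i+j) ω)^2 := fun ω => (sq _).symm
      rw [integral_congr_ae (Filter.Eventually.of_forall e)]
      exact Ysq (i+j) (by omega)
    · rw [if_neg (by omega)]
      have e : (j'-j)+(j-j') = j-j' := by omega
      rw [e]
      have ecomm : ∀ ω, mainPart μ X b (i+j) ω * mainPart μ X b (i+j') ω
          = mainPart μ X b (i+j') ω * mainPart μ X b (i+j) ω := fun ω => mul_comm _ _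
      rw [integral_congr_ae (Filter.Eventually.of_forall ecomm)]
      exact cross j' j (by omega) h
  have gapbound : ∀ j ∈ Finset.Icc 1 m,
      ∑ j' ∈ (Finset.Icc 1 m).erase j, Real.sqrt (phiCoef μ X ((j'-j)+(j-j'))) ≤ 2 * φ := by
    intro j hj
    rw [← Finset.sum_filter_add_sum_filter_not ((Finset.Icc 1 m).erase j) (fun j' => j' < j)]
    have part1 : ∑ j' ∈ ((Finset.Icc 1 m).erase j).filter (fun j' => j' < j),
        Real.sqrt (phiCoef μ X ((j'-j)+(j-j'))) ≤ φ := by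
      have e : ∀ j' ∈ ((Finset.Icc 1 m).erase j).filter (fun j' => j' < j),
          Real.sqrt (phiCoef μ X ((j'-j)+(j-j')))
            = Real.sqrt (phiCoef μ X ((j - j' - 1) + 1)) := by
        intro j' hj'
        simp only [Finset.mem_filter] at hj'
        have : (j'-j)+(j-j') = (j - j' - 1) + 1 := by omega
        rw [this]
      have inj : ∀ x ∈ ((Finset.Icc 1 m).erase j).filter (fun j' => j' < j),
          ∀ y ∈ ((Finset.Icc 1 m).erase j).filter (fun j' => j' < j),
          j - x - 1 = j - y - 1 → x = y := by
        intro x hx y hy hxy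
        simp only [Finset.mem_filter] at hx hy
        omega
      have himg : ∑ d ∈ (((Finset.Icc 1 m).erase j).filter (fun j' => j' < j)).image
            (fun j' => j - j' - 1), Real.sqrt (phiCoef μ X (d+1))
          = ∑ j' ∈ ((Finset.Icc 1 m).erase j).filter (fun j' => j' < j),
              Real.sqrt (phiCoef μ X ((j - j' - 1) + 1)) := Finset.sum_image inj
      rw [Finset.sum_congr rfl e, ← himg, hφ]
      exact Summable.sum_le_tsum _ (fun d _ => Real.sqrt_nonneg _) hsumm
    have part2 : ∑ j' ∈ ((Finset.Icc 1 m).erase j).filter (fun j' => ¬ j' < j),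
        Real.sqrt (phiCoef μ X ((j'-j)+(j-j'))) ≤ φ := by
      have e : ∀ j' ∈ ((Finset.Icc 1 m).erase j).filter (fun j' => ¬ j' < j),
          Real.sqrt (phiCoef μ X ((j'-j)+(j-j')))
            = Real.sqrt (phiCoef μ X ((j' - j - 1) + 1)) := by
        intro j' hj'
        simp only [Finset.mem_filter, Finset.mem_erase] at hj'
        have : (j'-j)+(j-j') = (j' - j - 1) + 1 := by omega
        rw [this]
      have inj : ∀ x ∈ ((Finset.Icc 1 m).erase j).filter (fun j' => ¬ j' < j),
          ∀ y ∈ ((Finset.Icc 1 m).erase j).filter (fun j' => ¬ j' < j),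
          x - j - 1 = y - j - 1 → x = y := by
        intro x hx y hy hxy
        simp only [Finset.mem_filter, Finset.mem_erase] at hx hy
        omega
      have himg : ∑ d ∈ (((Finset.Icc 1 m).erase j).filter (fun j' => ¬ j' < j)).image
            (fun j' => j' - j - 1), Real.sqrt (phiCoef μ X (d+1))
          = ∑ j' ∈ ((Finset.Icc 1 m).erase j).filter (fun j' => ¬ j' < j),
              Real.sqrt (phiCoef μ X ((j' - j - 1) + 1)) := Finset.sum_image inj
      rw [Finset.sum_congr rfl e, ← himg, hφ]
      exact Summable.sum_le_tsum _ (fun d _ => Real.sqrt_nonneg _) hsumm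
    linarith
  have row : ∀ j ∈ Finset.Icc 1 m,
      ∑ j' ∈ Finset.Icc 1 m, (if j = j' then (1:ℝ)
        else 2 * Real.sqrt (phiCoef μ X ((j'-j)+(j-j')))) * (να * b^(1-α))
        ≤ (1 + 4*φ) * (να * b^(1-α)) := by
    intro j hj
    rw [← Finset.sum_erase_add _ _ hj, if_pos rfl, one_mul]
    have h1 : ∑ j' ∈ (Finset.Icc 1 m).erase j, (if j = j' then (1:ℝ)
        else 2 * Real.sqrt (phiCoef μ X ((j'-j)+(j-j')))) * (να * b^(1-α))
        = 2 * (να * b^(1-α)) * ∑ j' ∈ (Finset.Icc 1 m).erase j,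
            Real.sqrt (phiCoef μ X ((j'-j)+(j-j'))) := by
      rw [Finset.mul_sum]
      refine Finset.sum_congr rfl fun j' hj' => ?_
      rw [if_neg (Finset.ne_of_mem_erase hj').symm]
      ring
    rw [h1]
    have h2 : 2 * (να * b^(1-α)) * ∑ j' ∈ (Finset.Icc 1 m).erase j,
        Real.sqrt (phiCoef μ X ((j'-j)+(j-j'))) ≤ 2 * (να * b^(1-α)) * (2 * φ) :=
      mul_le_mul_of_nonneg_left (gapbound j hj) (by positivity)
    nlinarith [hKnn]
  have expand : ∫ ω, (∑ j ∈ Finset.Icc 1 m, mainPart μ X b (i + j) ω) ^ 2 ∂μ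
      = ∑ j ∈ Finset.Icc 1 m, ∑ j' ∈ Finset.Icc 1 m,
          ∫ ω, mainPart μ X b (i+j) ω * mainPart μ X b (i+j') ω ∂μ := by
    have e : ∀ ω, (∑ j ∈ Finset.Icc 1 m, mainPart μ X b (i + j) ω) ^ 2
        = ∑ j ∈ Finset.Icc 1 m, ∑ j' ∈ Finset.Icc 1 m,
            mainPart μ X b (i+j) ω * mainPart μ X b (i+j') ω := by
      intro ω; rw [sq, Finset.sum_mul_sum]
    rw [integral_congr_ae (Filter.Eventually.of_forall e),
      integral_finset_sum _ (fun j _ => integrable_finset_sum _ (fun j' _ => Yprod_int _ _))]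
    exact Finset.sum_congr rfl fun j _ =>
      integral_finset_sum _ (fun j' _ => Yprod_int _ _)
  calc ∫ ω, (∑ j ∈ Finset.Icc 1 m, mainPart μ X b (i + j) ω) ^ 2 ∂μ
      = ∑ j ∈ Finset.Icc 1 m, ∑ j' ∈ Finset.Icc 1 m,
          ∫ ω, mainPart μ X b (i+j) ω * mainPart μ X b (i+j') ω ∂μ := expand
    _ ≤ ∑ j ∈ Finset.Icc 1 m, ∑ j' ∈ Finset.Icc 1 m, (if j = j' then (1:ℝ)
          else 2 * Real.sqrt (phiCoef μ X ((j'-j)+(j-j')))) * (να * b^(1-α)) :=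
        Finset.sum_le_sum fun j hj => Finset.sum_le_sum fun j' hj' => pair j hj j' hj'
    _ ≤ ∑ j ∈ Finset.Icc 1 m, (1 + 4*φ) * (να * b^(1-α)) :=
        Finset.sum_le_sum fun j hj => row j hj
    _ = m * να * (1 + 4 * φ) * b ^ (1 - α) := by
        rw [Finset.sum_const, Nat.card_Icc]
        simp only [Nat.add_sub_cancel, nsmul_eq_mul]
        ring
end
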